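/- arXiv:1907.12267 — 3 statements merged into one kernel-verified Lean document; each statement's English description precedes it below -/
import Mathlib

section
/- Let X be a random variable with the chi distribution with k degrees of freedom, for any real k > 0. Then X satisfies a Poincaré inequality with constant 1: for every continuously differentiable function f : ℝ → ℝ with f and f' square-integrable with respect to the law of X, Var[f(X)] ≤ E[f'(X)²]. -/
open MeasureTheory

/-- The chi distribution with `k` degrees of freedom: density proportional to
`x^(k-1) * exp (-x^2/2)` on `(0, ∞)`. -/
noncomputable def chiMeasure (k : ℝ) : Measure ℝ :=
  volume.withDensity fun x =>
    ENNReal.ofReal (if 0 < x then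
      x ^ (k - 1) * Real.exp (-x ^ 2 / 2) / ((2 : ℝ) ^ (k / 2 - 1) * Real.Gamma (k / 2))
    else 0)

open MeasureTheory Real Set Filter
open scoped NNReal ENNReal

namespace ChiAux

/-- unnormalized chi density -/
noncomputable def phi (k x : ℝ) : ℝ := x ^ (k - 1) * Real.exp (-x ^ 2 / 2)

lemma phi_nonneg {k x : ℝ} (hx : 0 < x) : 0 ≤ phi k x :=
  mul_nonneg (Real.rpow_nonneg hx.le _) (Real.exp_nonneg _)

lemma phi_pos {k x : ℝ} (hx : 0 < x) : 0 < phi k x :=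
  mul_pos (Real.rpow_pos_of_pos hx _) (Real.exp_pos _)

lemma continuousAt_phi {k x : ℝ} (hx : 0 < x) : ContinuousAt (phi k) x := by
  have h1 : ContinuousAt (fun y : ℝ => y ^ (k - 1)) x :=
    Real.continuousAt_rpow_const x (k - 1) (Or.inl hx.ne')
  have h2 : ContinuousAt (fun y : ℝ => Real.exp (-y ^ 2 / 2)) x := by fun_prop
  exact h1.mul h2

lemma measurable_phi (k : ℝ) : Measurable (phi k) := by
  unfold phi; fun_prop

lemma measurable_g (k m : ℝ) : Measurable (fun x => (x - m) * phi k x) :=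
  (measurable_id.sub measurable_const).mul (measurable_phi k)

lemma integrableOn_phi {k : ℝ} (hk : 0 < k) : IntegrableOn (phi k) (Ioi 0) := by
  have := integrableOn_rpow_mul_exp_neg_mul_sq (b := 1/2) (by norm_num) (s := k - 1)
    (by linarith)
  refine this.congr_fun (fun x _ => ?_) measurableSet_Ioi
  unfold phi; ring_nf

lemma integrableOn_id_mul_phi {k : ℝ} (hk : 0 < k) :
    IntegrableOn (fun x => x * phi k x) (Ioi 0) := by
  have := integrableOn_rpow_mul_exp_neg_mul_sq (b := 1/2) (by norm_num) (s := k)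
    (by linarith)
  refine this.congr_fun (fun x hx => ?_) measurableSet_Ioi
  unfold phi
  beta_reduce
  rw [show -(1/2 : ℝ) * x ^ 2 = -x ^ 2 / 2 by ring]
  rw [show x ^ k = x ^ (k - 1 + 1) by ring_nf, Real.rpow_add_one (ne_of_gt hx)]
  ring

lemma integrableOn_g {k : ℝ} (hk : 0 < k) (m : ℝ) :
    IntegrableOn (fun x => (x - m) * phi k x) (Ioi 0) := by
  have h3 : IntegrableOn (fun x => x * phi k x - m * phi k x) (Ioi 0) :=
    (integrableOn_id_mul_phi hk).sub ((integrableOn_phi hk).const_mul m)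
  refine h3.congr_fun (fun x _ => ?_) measurableSet_Ioi
  ring

/-- tail integral of `(x - m) * phi k x` -/
noncomputable def psi (k m t : ℝ) : ℝ := ∫ x in Ioi t, (x - m) * phi k x

lemma integrableOn_g_Ioi {k : ℝ} (hk : 0 < k) (m : ℝ) {t : ℝ} (ht : 0 ≤ t) :
    IntegrableOn (fun x => (x - m) * phi k x) (Ioi t) :=
  (integrableOn_g hk m).mono_set (Ioi_subset_Ioi ht)

lemma psi_eq {k : ℝ} (hk : 0 < k) (m : ℝ) {t : ℝ} (ht : 0 < t) :
    psi k m t = psi k m 1 + ∫ x in t..(1:ℝ), (x - m) * phi k x := by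
  set g : ℝ → ℝ := fun x => (x - m) * phi k x with hg
  rcases le_total t 1 with h | h
  · have hsplit : Ioc t 1 ∪ Ioi (1:ℝ) = Ioi t := Ioc_union_Ioi_eq_Ioi h
    have h1 : IntegrableOn g (Ioc t 1) :=
      (integrableOn_g hk m).mono_set (fun x hx => ht.trans hx.1)
    have h2 : IntegrableOn g (Ioi (1:ℝ)) := integrableOn_g_Ioi hk m zero_le_one
    have := setIntegral_union (Ioc_disjoint_Ioi le_rfl) measurableSet_Ioi h1 h2 (f := g)
    rw [hsplit] at this
    rw [intervalIntegral.integral_of_le h]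
    unfold psi
    rw [this]; ring
  · have hsplit : Ioc 1 t ∪ Ioi t = Ioi (1:ℝ) := Ioc_union_Ioi_eq_Ioi h
    have h1 : IntegrableOn g (Ioc 1 t) :=
      (integrableOn_g hk m).mono_set (fun x hx => one_pos.trans hx.1)
    have h2 : IntegrableOn g (Ioi t) := integrableOn_g_Ioi hk m ht.le
    have := setIntegral_union (Ioc_disjoint_Ioi le_rfl) measurableSet_Ioi h1 h2 (f := g)
    rw [hsplit] at this
    rw [intervalIntegral.integral_symm, intervalIntegral.integral_of_le h]
    unfold psi
    rw [this]; ring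

lemma hasDerivAt_phi {k t : ℝ} (ht : 0 < t) :
    HasDerivAt (phi k) (((k - 1) / t - t) * phi k t) t := by
  have h1 : HasDerivAt (fun x : ℝ => x ^ (k - 1)) ((k - 1) * t ^ (k - 1 - 1)) t :=
    Real.hasDerivAt_rpow_const (Or.inl ht.ne')
  have h2 : HasDerivAt (fun x : ℝ => Real.exp (-x ^ 2 / 2)) (-t * Real.exp (-t ^ 2 / 2)) t := by
    have hinner : HasDerivAt (fun x : ℝ => -x ^ 2 / 2) (-t) t := by
      have := ((hasDerivAt_pow 2 t).neg).div_const 2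
      simpa using this.congr_deriv (by push_cast; ring)
    simpa [mul_comm] using hinner.exp
  have := h1.mul h2
  unfold phi
  refine this.congr_deriv ?_
  rw [show k - 1 - 1 = k - 1 - 1 from rfl, Real.rpow_sub_one (y := k - 1) ht.ne']
  field_simp
  ring

lemma hasDerivAt_psi {k : ℝ} (hk : 0 < k) (m : ℝ) {t : ℝ} (ht : 0 < t) :
    HasDerivAt (psi k m) (-((t - m) * phi k t)) t := by
  set g : ℝ → ℝ := fun x => (x - m) * phi k x with hg
  have hcont : ContinuousAt g t :=
    ((continuousAt_id.sub continuousAt_const).mul (continuousAt_phi ht))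
  have hii : IntervalIntegrable g volume 1 t := by
    apply ContinuousOn.intervalIntegrable
    intro x hx
    have hx0 : 0 < x := lt_of_lt_of_le (lt_min one_pos ht) (by
      rcases hx with ⟨h1, _⟩; exact h1)
    exact ((continuousAt_id.sub continuousAt_const).mul (continuousAt_phi hx0)).continuousWithinAt
  have hF : HasDerivAt (fun u => ∫ x in (1:ℝ)..u, g x) (g t) t :=
    intervalIntegral.integral_hasDerivAt_right hii
      ((measurable_g k m).aestronglyMeasurable.stronglyMeasurableAtFilter) hcont
  have hG : HasDerivAt (fun u => psi k m 1 + ∫ x in u..(1:ℝ), g x) (-(g t)) t := by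
    have : HasDerivAt (fun u => psi k m 1 + -∫ x in (1:ℝ)..u, g x) (-(g t)) t :=
      (hF.neg).const_add _
    refine this.congr_of_eventuallyEq (Eventually.of_forall fun u => ?_)
    simp [intervalIntegral.integral_symm 1 u]
  have hEq : psi k m =ᶠ[nhds t] fun u => psi k m 1 + ∫ x in u..(1:ℝ), g x := by
    filter_upwards [eventually_gt_nhds ht] with u hu  -- wrong: we need u > 0
    exact psi_eq hk m hu
  exact (hG.congr_of_eventuallyEq hEq)


lemma tendsto_phi_atTop (k : ℝ) : Tendsto (phi k) atTop (nhds 0) := by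
  obtain ⟨n, hn⟩ : ∃ n : ℕ, k - 1 ≤ n := exists_nat_ge (k - 1)
  have hb : Tendsto (fun x : ℝ => x ^ n * Real.exp (-x)) atTop (nhds 0) :=
    Real.tendsto_pow_mul_exp_neg_atTop_nhds_zero n
  refine squeeze_zero' ?_ ?_ hb
  · filter_upwards [eventually_ge_atTop (1:ℝ)] with x hx
    exact phi_nonneg (lt_of_lt_of_le one_pos hx)
  · filter_upwards [eventually_ge_atTop (2:ℝ)] with x hx
    have hx1 : (1:ℝ) ≤ x := by linarith
    have h1 : x ^ (k - 1) ≤ x ^ (n : ℝ) := Real.rpow_le_rpow_of_exponent_le hx1 hn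
    have h2 : Real.exp (-x ^ 2 / 2) ≤ Real.exp (-x) := by
      apply Real.exp_le_exp.2; nlinarith
    calc phi k x ≤ x ^ (n : ℝ) * Real.exp (-x) := by
          exact mul_le_mul h1 h2 (Real.exp_nonneg _) (Real.rpow_nonneg (by linarith) _)
      _ = x ^ n * Real.exp (-x) := by rw [Real.rpow_natCast]

lemma tendsto_psi_atTop {k : ℝ} (hk : 0 < k) (m : ℝ) :
    Tendsto (psi k m) atTop (nhds 0) := by
  have h := MeasureTheory.intervalIntegral_tendsto_integral_Ioi (1:ℝ)
    (integrableOn_g_Ioi hk m zero_le_one) tendsto_id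
  have h2 : Tendsto (fun t => psi k m 1 - ∫ x in (1:ℝ)..t, (x - m) * phi k x)
      atTop (nhds (psi k m 1 - psi k m 1)) := tendsto_const_nhds.sub h
  rw [sub_self] at h2
  refine h2.congr' ?_
  filter_upwards [eventually_gt_atTop (0:ℝ)] with t ht
  rw [psi_eq hk m ht, intervalIntegral.integral_symm 1 t]
  ring

lemma tendsto_psi_zero {k : ℝ} (hk : 0 < k) (m : ℝ) :
    Tendsto (psi k m) (nhdsWithin 0 (Ioi 0)) (nhds (∫ x in Ioi 0, (x - m) * phi k x)) := by
  set g : ℝ → ℝ := fun x => (x - m) * phi k x with hg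
  have hcov : AECover (volume.restrict (Ioi (0:ℝ))) (nhdsWithin 0 (Ioi 0))
      (fun s => Ioi s) := by
    constructor
    · filter_upwards [ae_restrict_mem measurableSet_Ioi] with x hx
      have : ∀ᶠ s in nhds (0:ℝ), s < x := eventually_lt_nhds hx
      exact (this.filter_mono nhdsWithin_le_nhds).mono fun s hs => hs
    · intro s; exact measurableSet_Ioi
  have h := hcov.integral_tendsto_of_countably_generated (integrableOn_g hk m)
  refine h.congr' ?_
  filter_upwards [self_mem_nhdsWithin] with s hs
  rw [Measure.restrict_restrict measurableSet_Ioi]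
  congr 1
  rw [Ioi_inter_Ioi, max_eq_left (le_of_lt hs)]

lemma tendsto_phi_zero {k : ℝ} (hk : 1 < k) :
    Tendsto (phi k) (nhdsWithin 0 (Ioi 0)) (nhds 0) := by
  have h1 : ContinuousAt (fun x : ℝ => x ^ (k - 1)) 0 :=
    Real.continuousAt_rpow_const 0 (k - 1) (Or.inr (by linarith))
  have h2 : ContinuousAt (fun x : ℝ => Real.exp (-x ^ 2 / 2)) 0 := by fun_prop
  have := (h1.mul h2).tendsto
  have h0 : ((0:ℝ) ^ (k - 1) * Real.exp (-(0:ℝ) ^ 2 / 2)) = 0 := by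
    rw [Real.zero_rpow (by linarith : k - 1 ≠ 0)]; ring
  simp only [Pi.mul_apply] at this
  rw [h0] at this
  exact (this.mono_left nhdsWithin_le_nhds)

/-- The core analytic inequality. -/
lemma core {k : ℝ} (hk : 0 < k) {m : ℝ} (hm : 0 < m)
    (hmean : (∫ x in Ioi (0:ℝ), (x - m) * phi k x) = 0)
    {t : ℝ} (ht : 0 < t) : psi k m t ≤ phi k t := by
  set D : ℝ → ℝ := fun s => phi k s - psi k m s with hD
  have hDderiv : ∀ s, 0 < s → HasDerivAt D (((k - 1) / s - m) * phi k s) s := by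
    intro s hs
    have := (hasDerivAt_phi (k := k) hs).sub (hasDerivAt_psi hk m hs)
    refine this.congr_deriv ?_
    field_simp
    ring
  suffices h : 0 ≤ D t by simpa [hD] using h
  rcases le_or_gt (k - 1) (m * t) with hcase | hcase
  · -- D is antitone on [t, ∞) and tends to 0
    have hanti : AntitoneOn D (Ici t) := by
      apply antitoneOn_of_deriv_nonpos (convex_Ici t)
      · intro s hs
        exact ((hDderiv s (ht.trans_le hs)).differentiableAt).continuousAt.continuousWithinAt
      · intro s hs
        rw [interior_Ici] at hs
        exact ((hDderiv s (ht.trans hs)).differentiableAt).differentiableWithinAt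
      · intro s hs
        rw [interior_Ici] at hs
        have hst : t < s := hs
        have hs0 : 0 < s := ht.trans hst
        rw [(hDderiv s hs0).deriv]
        apply mul_nonpos_of_nonpos_of_nonneg _ (phi_nonneg hs0)
        rw [sub_nonpos, div_le_iff₀ hs0]
        nlinarith
    have hlim : Tendsto D atTop (nhds 0) := by
      have := (tendsto_phi_atTop k).sub (tendsto_psi_atTop hk m)
      simpa using this
    refine le_of_tendsto hlim ?_
    filter_upwards [eventually_ge_atTop t] with s hs
    exact hanti (show t ∈ Ici t from le_refl t) hs hs
  · -- k > 1 and D is monotone on (0, t], tends to 0 at 0+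
    have hk1 : 1 < k := by nlinarith
    have hmono : MonotoneOn D (Ioc 0 t) := by
      apply monotoneOn_of_deriv_nonneg (convex_Ioc 0 t)
      · intro s hs
        exact ((hDderiv s hs.1).differentiableAt).continuousAt.continuousWithinAt
      · intro s hs
        have hs' : s ∈ Ioo 0 t := by
          rwa [interior_Ioc] at hs
        exact ((hDderiv s hs'.1).differentiableAt).differentiableWithinAt
      · intro s hs
        have hs' : s ∈ Ioo 0 t := by rwa [interior_Ioc] at hs
        rw [(hDderiv s hs'.1).deriv]
        apply mul_nonneg _ (phi_nonneg hs'.1)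
        rw [sub_nonneg, le_div_iff₀ hs'.1]
        nlinarith [hs'.2, hm]
    have hlim : Tendsto D (nhdsWithin 0 (Ioi 0)) (nhds 0) := by
      have := (tendsto_phi_zero hk1).sub (tendsto_psi_zero hk m)
      rw [hmean] at this
      simpa using this
    refine le_of_tendsto hlim ?_
    filter_upwards [Ioo_mem_nhdsGT_of_mem (by constructor <;> [rfl; exact ht] : (0:ℝ) ∈ Ico 0 t)] with s hs
    exact hmono ⟨hs.1, hs.2.le⟩ ⟨ht, le_rfl⟩ hs.2.le

end ChiAux

open ChiAux

namespace ChiAux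

/-- normalization constant -/
noncomputable def C (k : ℝ) : ℝ := (2 : ℝ) ^ (k / 2 - 1) * Real.Gamma (k / 2)

lemma C_pos {k : ℝ} (hk : 0 < k) : 0 < C k :=
  mul_pos (Real.rpow_pos_of_pos two_pos _) (Real.Gamma_pos_of_pos (by linarith))

/-- density of the chi measure, as a real function -/
noncomputable def rho (k : ℝ) : ℝ → ℝ := fun x => if 0 < x then phi k x / C k else 0

lemma rho_nonneg {k : ℝ} (hk : 0 < k) (x : ℝ) : 0 ≤ rho k x := by
  unfold rho
  split
  · exact div_nonneg (phi_nonneg (by assumption)) (C_pos hk).le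
  · exact le_rfl

lemma measurable_rho (k : ℝ) : Measurable (rho k) := by
  unfold rho
  exact Measurable.ite measurableSet_Ioi ((measurable_phi k).div_const _) measurable_const

lemma chiMeasure_eq (k : ℝ) :
    chiMeasure k = volume.withDensity (fun x => ENNReal.ofReal (rho k x)) := by
  unfold chiMeasure rho phi C
  rfl

lemma chiMeasure_apply {k : ℝ} {s : Set ℝ} (hs : MeasurableSet s) :
    chiMeasure k s = ∫⁻ x in s, ENNReal.ofReal (rho k x) := by
  rw [chiMeasure_eq, withDensity_apply _ hs]

lemma chiMeasure_Iic_zero {k : ℝ} : chiMeasure k (Iic 0) = 0 := by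
  rw [chiMeasure_apply measurableSet_Iic]
  rw [setLIntegral_congr_fun measurableSet_Iic
    (fun x hx => ?_), lintegral_zero]
  have : ¬ (0 < x) := not_lt.2 hx
  simp [rho, this]

lemma chiMeasure_Iio_zero {k : ℝ} {t : ℝ} (ht : t ≤ 0) : chiMeasure k (Iio t) = 0 :=
  measure_mono_null (fun x (hx : x < t) => le_of_lt (lt_of_lt_of_le hx ht))
    chiMeasure_Iic_zero


/-- integrals against withDensity rho are weighted integrals -/
lemma integral_withDensity_rho {k : ℝ} (hk : 0 < k) (g : ℝ → ℝ) (ν : Measure ℝ) :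
    ∫ x, g x ∂(ν.withDensity (fun x => ENNReal.ofReal (rho k x))) = ∫ x, rho k x * g x ∂ν := by
  have h : (fun x => ENNReal.ofReal (rho k x)) =
      (fun x => ((Real.toNNReal (rho k x) : ℝ≥0) : ℝ≥0∞)) := rfl
  rw [h, integral_withDensity_eq_integral_smul ((measurable_rho k).real_toNNReal)]
  congr 1
  funext x
  rw [NNReal.smul_def, Real.coe_toNNReal']
  rw [max_eq_left (rho_nonneg hk x), smul_eq_mul]

lemma integral_chiMeasure {k : ℝ} (hk : 0 < k) (g : ℝ → ℝ) :
    ∫ x, g x ∂(chiMeasure k) = ∫ x, rho k x * g x := by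
  rw [chiMeasure_eq, integral_withDensity_rho hk]

lemma setIntegral_chiMeasure {k : ℝ} (hk : 0 < k) (g : ℝ → ℝ) {s : Set ℝ}
    (hs : MeasurableSet s) :
    ∫ x in s, g x ∂(chiMeasure k) = ∫ x in s, rho k x * g x := by
  rw [chiMeasure_eq, restrict_withDensity hs, integral_withDensity_rho hk]

lemma lintegral_chiMeasure {k : ℝ} (g : ℝ → ℝ≥0∞) (hg : Measurable g) :
    ∫⁻ x, g x ∂(chiMeasure k) = ∫⁻ x, ENNReal.ofReal (rho k x) * g x := by
  rw [chiMeasure_eq,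
    lintegral_withDensity_eq_lintegral_mul _ ((measurable_rho k).ennreal_ofReal) hg]
  rfl

lemma integrable_chiMeasure_iff {k : ℝ} (hk : 0 < k) {g : ℝ → ℝ} :
    Integrable g (chiMeasure k) ↔ Integrable (fun x => g x * rho k x) volume := by
  rw [chiMeasure_eq, integrable_withDensity_iff
    ((measurable_rho k).ennreal_ofReal)
    (Filter.Eventually.of_forall (fun x => ENNReal.ofReal_lt_top))]
  constructor <;> intro h <;> refine h.congr (Filter.Eventually.of_forall fun x => ?_) <;>
    simp [ENNReal.toReal_ofReal (rho_nonneg hk x)]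

lemma integrable_id_chiMeasure {k : ℝ} (hk : 0 < k) :
    Integrable (fun x : ℝ => x) (chiMeasure k) := by
  rw [integrable_chiMeasure_iff hk]
  have heq : (fun x : ℝ => x * rho k x) =
      (Ioi (0:ℝ)).indicator (fun x => x * phi k x / C k) := by
    funext x
    by_cases hx : 0 < x
    · simp [rho, hx, indicator_of_mem, mul_div_assoc]
    · simp [rho, hx, indicator_of_notMem]
  rw [heq]
  exact IntegrableOn.integrable_indicator
    ((integrableOn_id_mul_phi hk).div_const (C k)) measurableSet_Ioi

lemma chiMeasure_Ioi_zero {k : ℝ} (hprob : IsProbabilityMeasure (chiMeasure k)) :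
    chiMeasure k (Ioi 0) = 1 := by
  haveI := hprob
  have h := measure_compl (μ := chiMeasure k) (measurableSet_Iic (a := (0:ℝ)))
    (measure_ne_top _ _)
  rw [compl_Iic, chiMeasure_Iic_zero, measure_univ] at h
  simpa using h

lemma mean_pos {k : ℝ} (hk : 0 < k) (hprob : IsProbabilityMeasure (chiMeasure k)) :
    0 < ∫ x, x ∂(chiMeasure k) := by
  haveI := hprob
  have hnn : 0 ≤ᵐ[chiMeasure k] (fun x : ℝ => x) := by
    rw [Filter.EventuallyLE, ae_iff]
    refine measure_mono_null (fun a ha => ?_) (chiMeasure_Iio_zero le_rfl)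
    simp only [mem_setOf_eq, Pi.zero_apply, not_le] at ha
    exact ha
  rw [integral_pos_iff_support_of_nonneg_ae hnn (integrable_id_chiMeasure hk)]
  have hsub : Ioi (0:ℝ) ⊆ Function.support (fun x : ℝ => x) := by
    intro x hx
    exact ne_of_gt hx
  calc (0:ℝ≥0∞) < 1 := by norm_num
    _ = chiMeasure k (Ioi 0) := (chiMeasure_Ioi_zero hprob).symm
    _ ≤ chiMeasure k (Function.support (fun x : ℝ => x)) := measure_mono hsub

lemma mean_eq {k : ℝ} (hk : 0 < k) (hprob : IsProbabilityMeasure (chiMeasure k)) :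
    ∫ x in Ioi (0:ℝ), (x - ∫ y, y ∂(chiMeasure k)) * phi k x = 0 := by
  haveI := hprob
  set m := ∫ y, y ∂(chiMeasure k) with hm
  have h0 : ∫ x, (x - m) ∂(chiMeasure k) = 0 := by
    rw [integral_sub (integrable_id_chiMeasure hk) (integrable_const m),
      integral_const]
    simp [measure_univ]
    exact sub_self _
  rw [integral_chiMeasure hk] at h0
  have h2 : (fun x => rho k x * (x - m)) =
      (Ioi (0:ℝ)).indicator (fun x => (x - m) * phi k x / C k) := by
    funext x
    by_cases hx : 0 < x
    · rw [indicator_of_mem (mem_Ioi.mpr hx)]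
      simp only [rho, if_pos hx]
      ring
    · rw [indicator_of_notMem (fun hmem => hx (mem_Ioi.mp hmem))]
      simp [rho, hx]
  rw [h2, integral_indicator measurableSet_Ioi] at h0
  have h3 : ∫ x in Ioi (0:ℝ), (x - m) * phi k x / C k
      = (∫ x in Ioi (0:ℝ), (x - m) * phi k x) / C k := integral_div _ _
  rw [h3, div_eq_zero_iff] at h0
  rcases h0 with h | h
  · exact h
  · exact absurd h (ne_of_gt (C_pos hk))

/-- Cauchy-Schwarz on an interval. -/
lemma sq_sub_le {f f' : ℝ → ℝ} (hderiv : ∀ x, HasDerivAt f (f' x) x) (hf' : Continuous f')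
    {a b : ℝ} (hab : a ≤ b) :
    (f b - f a) ^ 2 ≤ (b - a) * ∫ t in Ioc a b, f' t ^ 2 := by
  have hftc : ∫ t in a..b, f' t = f b - f a :=
    intervalIntegral.integral_eq_sub_of_hasDerivAt (fun t _ => hderiv t)
      (hf'.intervalIntegrable a b)
  set ν := volume.restrict (Ioc a b) with hν
  have habs : |f b - f a| ≤ ∫ t, |f' t| ∂ν := by
    rw [← hftc, intervalIntegral.integral_of_le hab, ← Real.norm_eq_abs]
    refine (norm_integral_le_integral_norm _).trans_eq ?_
    simp [hν, Real.norm_eq_abs]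
  have hsq_int : Integrable (fun t => f' t ^ 2) ν :=
    ((hf'.pow 2).continuousOn.integrableOn_compact isCompact_Icc).mono_set Ioc_subset_Icc_self
  have h2eq : ENNReal.ofReal (2:ℝ) = 2 := by
    rw [ENNReal.ofReal_ofNat]
  have hmem : MemLp f' (ENNReal.ofReal 2) ν := by
    rw [h2eq]
    exact (memLp_two_iff_integrable_sq hf'.aestronglyMeasurable).2 hsq_int
  have hmem1 : MemLp (fun _ : ℝ => (1:ℝ)) (ENNReal.ofReal 2) ν := memLp_const 1
  have hconj : Real.HolderConjugate 2 2 := ⟨by norm_num, by norm_num, by norm_num⟩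
  have hh := integral_mul_norm_le_Lp_mul_Lq hconj hmem hmem1
  have h1 : ∫ t, ‖f' t‖ * ‖(1:ℝ)‖ ∂ν = ∫ t, |f' t| ∂ν := by
    simp [Real.norm_eq_abs]
  have h2 : ∫ t, ‖f' t‖ ^ (2:ℝ) ∂ν = ∫ t, f' t ^ 2 ∂ν := by
    refine integral_congr_ae (Filter.Eventually.of_forall fun t => ?_)
    show ‖f' t‖ ^ (2:ℝ) = f' t ^ 2
    rw [Real.norm_eq_abs, show (2:ℝ) = ((2:ℕ):ℝ) by norm_num, Real.rpow_natCast, sq_abs]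
  have h3 : ∫ t, ‖(1:ℝ)‖ ^ (2:ℝ) ∂ν = b - a := by
    simp only [norm_one, Real.one_rpow, integral_const, smul_eq_mul, mul_one]
    rw [hν, measureReal_def, Measure.restrict_apply_univ, Real.volume_Ioc, ENNReal.toReal_ofReal (by linarith)]
  rw [h1, h2, h3] at hh
  have hA : 0 ≤ ∫ t, f' t ^ 2 ∂ν := integral_nonneg fun t => sq_nonneg _
  have hB : (0:ℝ) ≤ b - a := by linarith
  have habs_nonneg : 0 ≤ ∫ t, |f' t| ∂ν := integral_nonneg fun t => abs_nonneg _
  calc (f b - f a) ^ 2 = |f b - f a| ^ 2 := (sq_abs _).symm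
    _ ≤ (∫ t, |f' t| ∂ν) ^ 2 := pow_le_pow_left₀ (abs_nonneg _) habs 2
    _ ≤ ((∫ t, f' t ^ 2 ∂ν) ^ (1/(2:ℝ)) * (b - a) ^ (1/(2:ℝ))) ^ 2 :=
        pow_le_pow_left₀ habs_nonneg hh 2
    _ = (b - a) * ∫ t in Ioc a b, f' t ^ 2 := by
        rw [← Real.sqrt_eq_rpow, ← Real.sqrt_eq_rpow, mul_pow, Real.sq_sqrt hA,
          Real.sq_sqrt hB]
        ring

/-- kernel indicator functions -/
noncomputable def ind (x y t : ℝ) : ℝ≥0∞ :=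
  if min y x < t ∧ t ≤ max y x then ENNReal.ofReal |x - y| else 0

noncomputable def ind1 (x y t : ℝ) : ℝ≥0∞ :=
  if y < t ∧ t ≤ x then ENNReal.ofReal (x - y) else 0

lemma ind_split (x y t : ℝ) : ind x y t = ind1 x y t + ind1 y x t := by
  unfold ind ind1
  rcases le_total y x with h | h
  · rw [min_eq_left h, max_eq_right h, abs_of_nonneg (by linarith : (0:ℝ) ≤ x - y)]
    have hc : ¬ (x < t ∧ t ≤ y) := by rintro ⟨h2, h3⟩; linarith
    rw [if_neg hc, add_zero]
  · rw [min_eq_right h, max_eq_left h, abs_of_nonpos (by linarith : x - y ≤ 0), neg_sub]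
    have hc : ¬ (y < t ∧ t ≤ x) := by rintro ⟨h2, h3⟩; linarith
    rw [if_neg hc, zero_add]

/-- The key kernel bound, real form. -/
lemma key_bound {k : ℝ} (hk : 0 < k) (hprob : IsProbabilityMeasure (chiMeasure k))
    {t : ℝ} (ht : 0 < t) :
    (∫ x in Ici t, x ∂(chiMeasure k))
      - (∫ y, y ∂(chiMeasure k)) * ((chiMeasure k) (Ici t)).toReal ≤ rho k t := by
  haveI := hprob
  set μ := chiMeasure k with hμdef
  set m := ∫ y, y ∂μ with hm
  have hint : IntegrableOn (fun x : ℝ => x) (Ici t) μ :=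
    (integrable_id_chiMeasure hk).integrableOn
  have h1 : (∫ x in Ici t, x ∂μ) - m * (μ (Ici t)).toReal
      = ∫ x in Ici t, (x - m) ∂μ := by
    rw [integral_sub hint (integrableOn_const (measure_ne_top _ _))]
    rw [setIntegral_const, smul_eq_mul, measureReal_def]
    ring
  rw [h1, setIntegral_chiMeasure hk _ measurableSet_Ici, integral_Ici_eq_integral_Ioi]
  have h2 : ∫ x in Ioi t, rho k x * (x - m) = ∫ x in Ioi t, (x - m) * phi k x / C k := by
    refine setIntegral_congr_fun measurableSet_Ioi (fun x hx => ?_)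
    have hx0 : 0 < x := ht.trans hx
    simp only [rho, if_pos hx0]
    ring
  rw [h2, integral_div]
  have h3 : (∫ x in Ioi t, (x - m) * phi k x) ≤ phi k t :=
    core hk (mean_pos hk hprob) (mean_eq hk hprob) ht
  have h4 : rho k t = phi k t / C k := by simp [rho, if_pos ht]
  rw [h4]
  exact (div_le_div_iff_of_pos_right (C_pos hk)).2 h3

/-- The kernel bound in ENNReal form. -/
lemma K1_le {k : ℝ} (hk : 0 < k) (hprob : IsProbabilityMeasure (chiMeasure k)) (t : ℝ) :
    ∫⁻ x, ∫⁻ y, ind1 x y t ∂(chiMeasure k) ∂(chiMeasure k) ≤ ENNReal.ofReal (rho k t) := by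
  haveI := hprob
  set μ := chiMeasure k with hμdef
  rcases le_or_gt t 0 with ht | ht
  · have hz : ∀ x : ℝ, ∫⁻ y, ind1 x y t ∂μ = 0 := by
      intro x
      have hb : ∀ y, ind1 x y t ≤ (Iio t).indicator (fun _ => (⊤ : ℝ≥0∞)) y := by
        intro y
        unfold ind1
        split
        · rename_i h; rw [indicator_of_mem (mem_Iio.mpr h.1)]; exact le_top
        · exact zero_le
      have h2 := lintegral_mono (μ := μ) hb
      rw [lintegral_indicator measurableSet_Iio _, setLIntegral_const,
        chiMeasure_Iio_zero ht, mul_zero] at h2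
      exact le_antisymm h2 (zero_le)
    simp only [hz, lintegral_zero]
    exact zero_le
  · set Ft := (μ (Iio t)).toReal with hFt
    set mt := ∫ y in Iio t, y ∂μ with hmt
    set Mt := ∫ x in Ici t, x ∂μ with hMt
    set Gt := (μ (Ici t)).toReal with hGt
    have hid : Integrable (fun x : ℝ => x) μ := integrable_id_chiMeasure hk
    have hinner : ∀ x : ℝ, ∫⁻ y, ind1 x y t ∂μ
        = (Ici t).indicator (fun x => ENNReal.ofReal (x * Ft - mt)) x := by
      intro x
      by_cases hx : t ≤ x
      · have h1 : (fun y => ind1 x y t)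
            = fun y => (Iio t).indicator (fun y => ENNReal.ofReal (x - y)) y := by
          funext y
          unfold ind1
          by_cases hy : y < t
          · rw [if_pos ⟨hy, hx⟩, indicator_of_mem (mem_Iio.mpr hy)]
          · rw [if_neg (fun h => hy h.1), indicator_of_notMem
              (fun hmem => hy (mem_Iio.mp hmem))]
        rw [h1, lintegral_indicator measurableSet_Iio _]
        have hint : IntegrableOn (fun y : ℝ => x - y) (Iio t) μ :=
          (integrable_const x).integrableOn.sub hid.integrableOn
        have hnn : 0 ≤ᵐ[μ.restrict (Iio t)] fun y : ℝ => x - y := by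
          filter_upwards [ae_restrict_mem measurableSet_Iio] with y hy
          have hyt : y < t := hy
          show (0:ℝ) ≤ x - y
          linarith
        rw [← ofReal_integral_eq_lintegral_ofReal hint hnn,
          indicator_of_mem (mem_Ici.mpr hx)]
        congr 1
        rw [integral_sub (integrable_const x).integrableOn hid.integrableOn, setIntegral_const,
          smul_eq_mul, mul_comm, measureReal_def]
      · have h1 : ∀ y, ind1 x y t = 0 := by
          intro y; unfold ind1; rw [if_neg (fun h => hx h.2)]
        simp only [h1, lintegral_zero]
        rw [indicator_of_notMem (fun hmem => hx (mem_Ici.mp hmem))]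
    rw [lintegral_congr hinner, lintegral_indicator measurableSet_Ici _]
    have hintout : IntegrableOn (fun x : ℝ => x * Ft - mt) (Ici t) μ :=
      (hid.mul_const Ft).integrableOn.sub (integrable_const mt).integrableOn
    have hmt_le : mt ≤ t * Ft := by
      rw [hmt, hFt]
      have h := setIntegral_mono_on hid.integrableOn
        (integrableOn_const (measure_ne_top _ _))
        measurableSet_Iio (fun y (hy : y ∈ Iio t) => le_of_lt (mem_Iio.mp hy))
      rwa [setIntegral_const, smul_eq_mul, mul_comm, measureReal_def] at h
    have hnnout : 0 ≤ᵐ[μ.restrict (Ici t)] fun x : ℝ => x * Ft - mt := by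
      filter_upwards [ae_restrict_mem measurableSet_Ici] with x hx
      have hx' : t ≤ x := hx
      have hF0 : 0 ≤ Ft := ENNReal.toReal_nonneg
      show (0:ℝ) ≤ x * Ft - mt
      nlinarith
    rw [← ofReal_integral_eq_lintegral_ofReal hintout hnnout]
    apply ENNReal.ofReal_le_ofReal
    have houter : ∫ x in Ici t, (x * Ft - mt) ∂μ = Mt * Ft - mt * Gt := by
      rw [integral_sub (hid.mul_const Ft).integrableOn (integrable_const mt).integrableOn,
        integral_mul_const, setIntegral_const, smul_eq_mul, measureReal_def, hMt, hGt]
      ring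
    rw [houter]
    have hFG : Ft + Gt = 1 := by
      have hdis : Disjoint (Iio t) (Ici t) := Iio_disjoint_Ici le_rfl
      have hu := measure_union (μ := μ) hdis measurableSet_Ici
      rw [Iio_union_Ici, measure_univ] at hu
      rw [hFt, hGt, ← ENNReal.toReal_add (measure_ne_top _ _) (measure_ne_top _ _), ← hu]
      simp
    have hMm : mt + Mt = ∫ x, x ∂μ := by
      have hdis : Disjoint (Iio t) (Ici t) := Iio_disjoint_Ici le_rfl
      have hu := setIntegral_union hdis measurableSet_Ici hid.integrableOn hid.integrableOn
      rw [Iio_union_Ici] at hu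
      rw [hmt, hMt, ← hu, Measure.restrict_univ]
    have hkey := key_bound hk hprob ht
    have halg : Mt * Ft - mt * Gt = Mt - (∫ x, x ∂μ) * Gt := by
      linear_combination Mt * hFG - Gt * hMm
    rw [halg]
    exact hkey

lemma measurable_ind1_comp {α : Type*} [MeasurableSpace α] {X Y T : α → ℝ}
    (hX : Measurable X) (hY : Measurable Y) (hT : Measurable T) :
    Measurable (fun a => ind1 (X a) (Y a) (T a)) := by
  unfold ind1
  refine Measurable.ite ?_ ((hX.sub hY).ennreal_ofReal) measurable_const
  exact (measurableSet_lt hY hT).inter (measurableSet_le hT hX)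

lemma measurable_ind_comp {α : Type*} [MeasurableSpace α] {X Y T : α → ℝ}
    (hX : Measurable X) (hY : Measurable Y) (hT : Measurable T) :
    Measurable (fun a => ind (X a) (Y a) (T a)) := by
  unfold ind
  refine Measurable.ite ?_ ((hX.sub hY).abs.ennreal_ofReal) measurable_const
  exact (measurableSet_lt (hY.min hX) hT).inter (measurableSet_le hT (hY.max hX))

/-- Poincaré inequality for the chi measure. -/
lemma poincare {k : ℝ} (hk : 0 < k) (hprob : IsProbabilityMeasure (chiMeasure k))
    (f f' : ℝ → ℝ) (hderiv : ∀ x, HasDerivAt f (f' x) x) (hf' : Continuous f')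
    (hint1 : Integrable f (chiMeasure k))
    (hint2 : Integrable (fun x => f x ^ 2) (chiMeasure k))
    (hint3 : Integrable (fun x => f' x ^ 2) (chiMeasure k)) :
    (∫ x, f x ^ 2 ∂(chiMeasure k)) - (∫ x, f x ∂(chiMeasure k)) ^ 2
      ≤ ∫ x, f' x ^ 2 ∂(chiMeasure k) := by
  haveI := hprob
  set μ := chiMeasure k with hμdef
  have hfc : Continuous f := continuous_iff_continuousAt.2 fun x => (hderiv x).continuousAt
  set If := ∫ x, f x ∂μ with hIf
  set If2 := ∫ x, f x ^ 2 ∂μ with hIf2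
  set R := ∫ x, f' x ^ 2 ∂μ with hR
  have hR0 : 0 ≤ R := integral_nonneg fun x => sq_nonneg _
  -- inner integrals
  have hexp : ∀ x : ℝ, (fun y => (f x - f y) ^ 2)
      = fun y => f x ^ 2 - 2 * f x * f y + f y ^ 2 := by
    intro x; funext y; ring
  have hIy : ∀ x : ℝ, Integrable (fun y => (f x - f y) ^ 2) μ := by
    intro x
    rw [hexp x]
    exact ((integrable_const (f x ^ 2)).sub (hint1.const_mul (2 * f x))).add hint2
  have hinner : ∀ x : ℝ, ∫ y, (f x - f y) ^ 2 ∂μ = f x ^ 2 - 2 * If * f x + If2 := by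
    intro x
    have ha : Integrable (fun y => f x ^ 2 - 2 * f x * f y) μ :=
      (integrable_const (f x ^ 2)).sub (hint1.const_mul (2 * f x))
    have hb : Integrable (fun y : ℝ => 2 * f x * f y) μ := hint1.const_mul (2 * f x)
    rw [hexp x, integral_add ha hint2, integral_sub (integrable_const (f x ^ 2)) hb,
      integral_const, integral_const_mul, probReal_univ]
    simp only [ENNReal.toReal_one, smul_eq_mul, one_mul]
    rw [← hIf, ← hIf2]
    ring
  set G : ℝ → ℝ := fun x => f x ^ 2 - 2 * If * f x + If2 with hG
  have hGcont : Continuous G := by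
    apply Continuous.add
    · exact (hfc.pow 2).sub ((continuous_const.mul hfc))
    · exact continuous_const
  have hGnn : ∀ x, 0 ≤ G x := by
    intro x
    rw [hG]
    simp only
    rw [← hinner x]
    exact integral_nonneg fun y => sq_nonneg _
  have hGint : Integrable G μ :=
    (hint2.sub (hint1.const_mul (2 * If))).add (integrable_const If2)
  have houter : ∫ x, G x ∂μ = 2 * If2 - 2 * If ^ 2 := by
    have ha : Integrable (fun x => f x ^ 2 - 2 * If * f x) μ :=
      hint2.sub (hint1.const_mul (2 * If))
    have hb : Integrable (fun x : ℝ => 2 * If * f x) μ := hint1.const_mul (2 * If)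
    rw [hG]
    rw [integral_add ha (integrable_const If2), integral_sub hint2 hb, integral_const,
      integral_const_mul, probReal_univ]
    simp only [ENNReal.toReal_one, smul_eq_mul, one_mul]
    rw [← hIf, ← hIf2]
    ring
  -- move to lintegral
  set g : ℝ → ℝ≥0∞ := fun t => ENNReal.ofReal (f' t ^ 2) with hgdef
  have hgmeas : Measurable g := ((hf'.pow 2).measurable).ennreal_ofReal
  set L := ∫⁻ x, ∫⁻ y, ENNReal.ofReal ((f x - f y) ^ 2) ∂μ ∂μ with hLdef
  have hGL : ∫ x, G x ∂μ = L.toReal := by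
    rw [integral_eq_lintegral_of_nonneg_ae (Filter.Eventually.of_forall hGnn)
      hGcont.aestronglyMeasurable]
    congr 1
    refine lintegral_congr fun x => ?_
    rw [show G x = ∫ y, (f x - f y) ^ 2 ∂μ from (hinner x).symm ▸ rfl]
    exact ofReal_integral_eq_lintegral_ofReal (hIy x)
      (Filter.Eventually.of_forall fun y => sq_nonneg _)
  -- pointwise Cauchy-Schwarz bound
  have hCS : ∀ x y : ℝ, ENNReal.ofReal ((f x - f y) ^ 2) ≤ ∫⁻ t, g t * ind x y t ∂volume := by
    have key : ∀ a b : ℝ, a ≤ b →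
        ENNReal.ofReal ((f b - f a) ^ 2) ≤
          (∫⁻ t in Ioc a b, g t ∂volume) * ENNReal.ofReal (b - a) := by
      intro a b hab
      have hint : IntegrableOn (fun t => f' t ^ 2) (Ioc a b) volume :=
        ((hf'.pow 2).continuousOn.integrableOn_compact isCompact_Icc).mono_set
          Ioc_subset_Icc_self
      have h1 : (∫⁻ t in Ioc a b, g t ∂volume)
          = ENNReal.ofReal (∫ t in Ioc a b, f' t ^ 2) :=
        (ofReal_integral_eq_lintegral_ofReal hint
          (Filter.Eventually.of_forall fun t => sq_nonneg _)).symm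
      rw [h1, ← ENNReal.ofReal_mul (integral_nonneg fun t => sq_nonneg _)]
      apply ENNReal.ofReal_le_ofReal
      calc (f b - f a) ^ 2 ≤ (b - a) * ∫ t in Ioc a b, f' t ^ 2 := sq_sub_le hderiv hf' hab
        _ = (∫ t in Ioc a b, f' t ^ 2) * (b - a) := by ring
    intro x y
    rcases le_total y x with h | h
    · have hindeq : (fun t => g t * ind x y t)
          = fun t => (Ioc y x).indicator (fun t => g t * ENNReal.ofReal (x - y)) t := by
        funext t
        unfold ind
        rw [min_eq_left h, max_eq_right h, abs_of_nonneg (by linarith : (0:ℝ) ≤ x - y)]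
        by_cases hmem : y < t ∧ t ≤ x
        · rw [if_pos hmem, indicator_of_mem (mem_Ioc.mpr hmem)]
        · rw [if_neg hmem, indicator_of_notMem (fun hc => hmem (mem_Ioc.mp hc)), mul_zero]
      rw [hindeq, lintegral_indicator measurableSet_Ioc _,
        lintegral_mul_const' _ _ ENNReal.ofReal_ne_top]
      exact key y x h
    · have hindeq : (fun t => g t * ind x y t)
          = fun t => (Ioc x y).indicator (fun t => g t * ENNReal.ofReal (y - x)) t := by
        funext t
        unfold ind
        rw [min_eq_right h, max_eq_left h, abs_of_nonpos (by linarith : x - y ≤ 0), neg_sub]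
        by_cases hmem : x < t ∧ t ≤ y
        · rw [if_pos hmem, indicator_of_mem (mem_Ioc.mpr hmem)]
        · rw [if_neg hmem, indicator_of_notMem (fun hc => hmem (mem_Ioc.mp hc)), mul_zero]
      rw [hindeq, lintegral_indicator measurableSet_Ioc _,
        lintegral_mul_const' _ _ ENNReal.ofReal_ne_top]
      have hswap : (f x - f y) ^ 2 = (f y - f x) ^ 2 := by ring
      rw [hswap]
      exact key x y h
  -- measurability for Tonelli
  have hA : ∀ x : ℝ, AEMeasurable (fun p : ℝ × ℝ => g p.2 * ind x p.1 p.2) (μ.prod volume) :=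
    fun x => ((hgmeas.comp measurable_snd).mul
      (measurable_ind_comp measurable_const measurable_fst measurable_snd)).aemeasurable
  have hmaster : Measurable (Function.uncurry
      (fun (p : ℝ × ℝ) (y : ℝ) => g p.2 * ind p.1 y p.2)) := by
    have : Measurable (fun q : (ℝ × ℝ) × ℝ => g q.1.2 * ind q.1.1 q.2 q.1.2) :=
      (hgmeas.comp (measurable_snd.comp measurable_fst)).mul
        (measurable_ind_comp (measurable_fst.comp measurable_fst) measurable_snd
          (measurable_snd.comp measurable_fst))
    exact this
  have hB : AEMeasurable (fun p : ℝ × ℝ => ∫⁻ y, g p.2 * ind p.1 y p.2 ∂μ) (μ.prod volume) :=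
    (Measurable.lintegral_prod_right' hmaster).aemeasurable
  -- main estimate
  have hmain : L ≤ 2 * ENNReal.ofReal R := by
    have step1 : L ≤ ∫⁻ x, ∫⁻ y, (∫⁻ t, g t * ind x y t ∂volume) ∂μ ∂μ :=
      lintegral_mono fun x => lintegral_mono fun y => hCS x y
    have step2 : ∀ x : ℝ, ∫⁻ y, (∫⁻ t, g t * ind x y t ∂volume) ∂μ
        = ∫⁻ t, (∫⁻ y, g t * ind x y t ∂μ) ∂volume := fun x =>
      lintegral_lintegral_swap (hA x)
    have step3 : ∫⁻ x, ∫⁻ t, (∫⁻ y, g t * ind x y t ∂μ) ∂volume ∂μ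
        = ∫⁻ t, ∫⁻ x, (∫⁻ y, g t * ind x y t ∂μ) ∂μ ∂volume :=
      lintegral_lintegral_swap hB
    have hker : ∀ t : ℝ, ∫⁻ x, (∫⁻ y, g t * ind x y t ∂μ) ∂μ
        ≤ g t * (2 * ENNReal.ofReal (rho k t)) := by
      intro t
      have hpull : ∀ x : ℝ, ∫⁻ y, g t * ind x y t ∂μ = g t * ∫⁻ y, ind x y t ∂μ := fun x =>
        lintegral_const_mul' _ _ ENNReal.ofReal_ne_top
      have hK1meas : Measurable (fun x : ℝ => ∫⁻ y, ind1 x y t ∂μ) := by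
        have hm : Measurable (Function.uncurry (fun x y : ℝ => ind1 x y t)) := by
          have : Measurable (fun q : ℝ × ℝ => ind1 q.1 q.2 t) :=
            measurable_ind1_comp measurable_fst measurable_snd measurable_const
          exact this
        exact hm.lintegral_prod_right'
      calc ∫⁻ x, (∫⁻ y, g t * ind x y t ∂μ) ∂μ
          = ∫⁻ x, g t * ∫⁻ y, ind x y t ∂μ ∂μ := lintegral_congr hpull
        _ = g t * ∫⁻ x, ∫⁻ y, ind x y t ∂μ ∂μ :=
            lintegral_const_mul' _ _ ENNReal.ofReal_ne_top
        _ ≤ g t * (2 * ENNReal.ofReal (rho k t)) := by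
            apply mul_le_mul_right
            have h1 : ∀ x : ℝ, ∫⁻ y, ind x y t ∂μ
                = (∫⁻ y, ind1 x y t ∂μ) + ∫⁻ y, ind1 y x t ∂μ := by
              intro x
              have hma : Measurable (fun y : ℝ => ind1 x y t) :=
                measurable_ind1_comp measurable_const measurable_id measurable_const
              rw [← lintegral_add_left hma]
              exact lintegral_congr fun y => ind_split x y t
            have h2 : ∫⁻ x, ∫⁻ y, ind x y t ∂μ ∂μ
                = (∫⁻ x, ∫⁻ y, ind1 x y t ∂μ ∂μ) + ∫⁻ x, ∫⁻ y, ind1 y x t ∂μ ∂μ := by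
              rw [lintegral_congr h1]
              exact lintegral_add_left hK1meas _
            have h3 : ∫⁻ x, ∫⁻ y, ind1 y x t ∂μ ∂μ = ∫⁻ x, ∫⁻ y, ind1 x y t ∂μ ∂μ := by
              exact lintegral_lintegral_swap
                ((measurable_ind1_comp measurable_snd measurable_fst
                  measurable_const).aemeasurable)
            rw [h2, h3, two_mul]
            exact add_le_add (K1_le hk hprob t) (K1_le hk hprob t)
    have hfinal : ∫⁻ t, g t * (2 * ENNReal.ofReal (rho k t)) ∂volume
        = 2 * ENNReal.ofReal R := by
      have hcomm : ∀ t : ℝ, g t * (2 * ENNReal.ofReal (rho k t))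
          = 2 * (ENNReal.ofReal (rho k t) * g t) := fun t => by ring
      rw [lintegral_congr hcomm, lintegral_const_mul' 2 _ (by norm_num),
        ← lintegral_chiMeasure g hgmeas,
        ← ofReal_integral_eq_lintegral_ofReal hint3
          (Filter.Eventually.of_forall fun t => sq_nonneg _)]
    calc L ≤ ∫⁻ x, ∫⁻ y, (∫⁻ t, g t * ind x y t ∂volume) ∂μ ∂μ := step1
      _ = ∫⁻ t, ∫⁻ x, (∫⁻ y, g t * ind x y t ∂μ) ∂μ ∂volume := by
          rw [lintegral_congr step2, step3]
      _ ≤ ∫⁻ t, g t * (2 * ENNReal.ofReal (rho k t)) ∂volume := lintegral_mono hker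
      _ = 2 * ENNReal.ofReal R := hfinal
  -- conclusion
  have hne : (2 : ℝ≥0∞) * ENNReal.ofReal R ≠ ⊤ :=
    ENNReal.mul_ne_top (by norm_num) ENNReal.ofReal_ne_top
  have htR : L.toReal ≤ 2 * R := by
    have h := ENNReal.toReal_mono hne hmain
    rwa [ENNReal.toReal_mul, ENNReal.toReal_ofNat, ENNReal.toReal_ofReal hR0] at h
  have hvar : 2 * If2 - 2 * If ^ 2 = L.toReal := by rw [← houter, hGL]
  linarith


end ChiAux

open ChiAux in
/-- A chi-distributed random variable (any real `k > 0` degrees of freedom) satisfies a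
Poincaré inequality with constant `1`: `Var[f(X)] ≤ E[f'(X)^2]`. -/
theorem chi_poincare {Ω : Type*} [MeasurableSpace Ω] (P : Measure Ω) [IsProbabilityMeasure P]
    (k : ℝ) (hk : 0 < k) (X : Ω → ℝ) (hX : Measurable X)
    (hlaw : Measure.map X P = chiMeasure k)
    (f f' : ℝ → ℝ) (hderiv : ∀ x, HasDerivAt f (f' x) x) (hf' : Continuous f')
    (h1 : Integrable (fun ω => f (X ω)) P)
    (h2 : Integrable (fun ω => f (X ω) ^ 2) P)
    (h3 : Integrable (fun ω => f' (X ω) ^ 2) P) :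
    (∫ ω, f (X ω) ^ 2 ∂P) - (∫ ω, f (X ω) ∂P) ^ 2 ≤ ∫ ω, f' (X ω) ^ 2 ∂P := by
  have hfc : Continuous f := continuous_iff_continuousAt.2 fun x => (hderiv x).continuousAt
  have hprob : IsProbabilityMeasure (chiMeasure k) := by
    rw [← hlaw]; exact Measure.isProbabilityMeasure_map hX.aemeasurable
  have e1 : ∫ ω, f (X ω) ∂P = ∫ x, f x ∂(chiMeasure k) := by
    rw [← hlaw, integral_map hX.aemeasurable hfc.aestronglyMeasurable]
  have e2 : ∫ ω, f (X ω) ^ 2 ∂P = ∫ x, f x ^ 2 ∂(chiMeasure k) := by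
    rw [← hlaw, integral_map (f := fun x => f x ^ 2) hX.aemeasurable (hfc.pow 2).aestronglyMeasurable]
  have e3 : ∫ ω, f' (X ω) ^ 2 ∂P = ∫ x, f' x ^ 2 ∂(chiMeasure k) := by
    rw [← hlaw, integral_map (f := fun x => f' x ^ 2) hX.aemeasurable (hf'.pow 2).aestronglyMeasurable]
  have hint1 : Integrable f (chiMeasure k) := by
    rw [← hlaw]
    exact (integrable_map_measure hfc.aestronglyMeasurable hX.aemeasurable).2 h1
  have hint2 : Integrable (fun x => f x ^ 2) (chiMeasure k) := by
    rw [← hlaw]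
    exact (integrable_map_measure (hfc.pow 2).aestronglyMeasurable hX.aemeasurable).2 h2
  have hint3 : Integrable (fun x => f' x ^ 2) (chiMeasure k) := by
    rw [← hlaw]
    exact (integrable_map_measure (hf'.pow 2).aestronglyMeasurable hX.aemeasurable).2 h3
  rw [e1, e2, e3]
  exact poincare hk hprob f f' hderiv hf' hint1 hint2 hint3
end

section
/- Let Y be an M × N real matrix, X = YᵗY with eigenvalues λ_1, …, λ_N, and f : ℝ → ℝ continuously differentiable. Then Σ_{m,n} (∂ tr(f(YᵗY)) / ∂y_{mn})² = 4·tr(X·f'(X)²) = 4·Σ_{i=1}^N λ_i·f'(λ_i)². -/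
open Matrix Polynomial Topology

set_option linter.unusedSectionVars false
set_option maxHeartbeats 1000000

attribute [local instance] Matrix.linftyOpNormedAddCommGroup Matrix.linftyOpNormedRing
  Matrix.linftyOpNormedAlgebra

section Aux

variable {n : Type*} [Fintype n] [DecidableEq n]

lemma contOnSpec (g : ℝ → ℝ) (A : Matrix n n ℝ) : ContinuousOn g (spectrum ℝ A) := by
  rw [continuousOn_iff_continuous_restrict]; fun_prop

lemma trace_cfc' (A : Matrix n n ℝ) (hA : A.IsHermitian) (g : ℝ → ℝ) :
    (hA.cfc g).trace = ∑ i, g (hA.eigenvalues i) := by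
  rw [Matrix.IsHermitian.cfc, Unitary.conjStarAlgAut_apply, Matrix.trace_mul_cycle]
  rw [show star (hA.eigenvectorUnitary : Matrix n n ℝ) * (hA.eigenvectorUnitary : Matrix n n ℝ)
      = 1 from Unitary.coe_star_mul_self _, one_mul, Matrix.trace_diagonal]
  simp

lemma cfc_poly (A : Matrix n n ℝ) (hA : A.IsHermitian) (p : ℝ[X]) :
    hA.cfc (fun x => p.eval x) = Polynomial.aeval A p := by
  have hA' : IsSelfAdjoint A := hA
  rw [← Matrix.IsHermitian.cfc_eq, ← cfc_polynomial p A hA']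

lemma trace_eq_sum_eigenvalues (A : Matrix n n ℝ) (hA : A.IsHermitian) :
    A.trace = ∑ i, hA.eigenvalues i := by
  have hA' : IsSelfAdjoint A := hA
  conv_lhs => rw [← cfc_id' ℝ A hA', Matrix.IsHermitian.cfc_eq hA]
  rw [trace_cfc']

lemma unitary_entry_le (U : Matrix n n ℝ) (hU : star U * U = 1) (i j : n) : |U i j| ≤ 1 := by
  have h := congrFun (congrFun hU j) j
  simp [Matrix.mul_apply, Matrix.one_apply, Matrix.star_apply] at h
  have h1 : U i j ^ 2 ≤ 1 := by
    rw [← h]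
    calc U i j ^ 2 = U i j * U i j := by ring
    _ ≤ ∑ k, U k j * U k j :=
        Finset.single_le_sum (fun k _ => mul_self_nonneg (U k j)) (Finset.mem_univ i)
  nlinarith [abs_nonneg (U i j), sq_abs (U i j)]

lemma cfc_entry_eq (A : Matrix n n ℝ) (hA : A.IsHermitian) (g : ℝ → ℝ) (i j : n) :
    (hA.cfc g) i j = ∑ k, (hA.eigenvectorUnitary : Matrix n n ℝ) i k * g (hA.eigenvalues k)
        * (hA.eigenvectorUnitary : Matrix n n ℝ) j k := by
  rw [Matrix.IsHermitian.cfc]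
  simp [Matrix.mul_apply, Matrix.diagonal_apply, Matrix.star_apply, Finset.sum_mul, Finset.mul_sum]

lemma cfc_entry_le (A : Matrix n n ℝ) (hA : A.IsHermitian) (g : ℝ → ℝ) (ε : ℝ)
    (hg : ∀ i, |g (hA.eigenvalues i)| ≤ ε) (i j : n) :
    |(hA.cfc g) i j| ≤ (Fintype.card n : ℝ) * ε := by
  have hU : star (hA.eigenvectorUnitary : Matrix n n ℝ) * (hA.eigenvectorUnitary : Matrix n n ℝ)
      = 1 := Unitary.coe_star_mul_self _
  have hent : ∀ a b, |(hA.eigenvectorUnitary : Matrix n n ℝ) a b| ≤ 1 :=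
    fun a b => unitary_entry_le _ hU a b
  rw [cfc_entry_eq]
  calc |∑ k, (hA.eigenvectorUnitary : Matrix n n ℝ) i k * g (hA.eigenvalues k)
        * (hA.eigenvectorUnitary : Matrix n n ℝ) j k|
      ≤ ∑ k, |(hA.eigenvectorUnitary : Matrix n n ℝ) i k * g (hA.eigenvalues k)
        * (hA.eigenvectorUnitary : Matrix n n ℝ) j k| := Finset.abs_sum_le_sum_abs _ _
    _ ≤ ∑ _k : n, ε := by
        refine Finset.sum_le_sum fun k _ => ?_
        rw [abs_mul, abs_mul]
        have h1 := hent i k; have h2 := hent j k; have h3 := hg k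
        have h0 : (0:ℝ) ≤ ε := le_trans (abs_nonneg _) h3
        have h4 : |(hA.eigenvectorUnitary : Matrix n n ℝ) i k| * |g (hA.eigenvalues k)|
            * |(hA.eigenvectorUnitary : Matrix n n ℝ) j k| ≤ 1 * ε * 1 :=
          mul_le_mul (mul_le_mul h1 h3 (abs_nonneg _) zero_le_one) h2 (abs_nonneg _)
            (by linarith)
        linarith
    _ = (Fintype.card n : ℝ) * ε := by simp [Finset.sum_const, nsmul_eq_mul]

lemma abs_trace_mul_le (A B : Matrix n n ℝ) :
    |(A * B).trace| ≤ ∑ i, ∑ j, |A i j| * |B j i| := by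
  rw [Matrix.trace]
  refine le_trans (Finset.abs_sum_le_sum_abs _ _) (Finset.sum_le_sum fun i _ => ?_)
  rw [Matrix.diag, Matrix.mul_apply]
  refine le_trans (Finset.abs_sum_le_sum_abs _ _) (Finset.sum_le_sum fun j _ => ?_)
  rw [abs_mul]

lemma cfc_isHermitian (A : Matrix n n ℝ) (hA : A.IsHermitian) (g : ℝ → ℝ) :
    (hA.cfc g).IsHermitian := by
  rw [← Matrix.IsHermitian.cfc_eq]
  exact cfc_predicate g A

lemma cfc_sub' (A : Matrix n n ℝ) (hA : A.IsHermitian) (g h : ℝ → ℝ) :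
    hA.cfc g - hA.cfc h = hA.cfc (fun x => g x - h x) := by
  rw [← Matrix.IsHermitian.cfc_eq, ← Matrix.IsHermitian.cfc_eq, ← Matrix.IsHermitian.cfc_eq,
    ← cfc_sub g h A (contOnSpec g A) (contOnSpec h A)]

noncomputable def traceCLM : Matrix n n ℝ →L[ℝ] ℝ :=
  LinearMap.toContinuousLinearMap (Matrix.traceLinearMap n ℝ ℝ)

lemma hasDerivAt_trace {X : ℝ → Matrix n n ℝ} {X' : Matrix n n ℝ} {t₀ : ℝ}
    (h : HasDerivAt X X' t₀) : HasDerivAt (fun t => (X t).trace) X'.trace t₀ := by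
  have := (traceCLM (n := n)).hasFDerivAt.comp_hasDerivAt t₀ h
  simp [traceCLM, Function.comp_def] at this
  exact this

lemma hasDerivAt_pow_trace {X : ℝ → Matrix n n ℝ} {X' : Matrix n n ℝ} {t₀ : ℝ}
    (h : HasDerivAt X X' t₀) (k : ℕ) :
    HasDerivAt (fun t => ((X t) ^ k).trace) ((k : ℝ) * ((X t₀) ^ (k - 1) * X').trace) t₀ := by
  have key : ∀ k : ℕ, HasDerivAt (fun t => (X t) ^ k)
      (∑ j ∈ Finset.range k, (X t₀) ^ j * X' * (X t₀) ^ (k - 1 - j)) t₀ := by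
    intro k
    induction k with
    | zero => simp only [pow_zero, Finset.range_zero, Finset.sum_empty]; exact hasDerivAt_const t₀ (1 : Matrix n n ℝ)
    | succ k ih =>
      have h2 : HasDerivAt (fun t => (X t) ^ k * X t)
          ((∑ j ∈ Finset.range k, (X t₀) ^ j * X' * (X t₀) ^ (k - 1 - j)) * X t₀
            + (X t₀) ^ k * X') t₀ := ih.mul h
      have e1 : (fun t => (X t) ^ (k+1)) = fun t => (X t) ^ k * X t := by
        funext t; rw [pow_succ]
      rw [e1]
      convert h2 using 1
      rw [Finset.sum_range_succ, Finset.sum_mul]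
      congr 1
      · refine Finset.sum_congr rfl fun j hj => ?_
        rw [Finset.mem_range] at hj
        rw [mul_assoc, mul_assoc, ← pow_succ,
          show k - 1 - j + 1 = k + 1 - 1 - j from by omega, mul_assoc]
      · simp
  have htr := hasDerivAt_trace (key k)
  convert htr using 1
  rw [Matrix.trace_sum]
  rw [Finset.sum_congr rfl fun j hj => ?_, Finset.sum_const, Finset.card_range,
    nsmul_eq_mul]
  rw [Matrix.trace_mul_cycle, ← pow_add,
    show k - 1 - j + j = k - 1 from by rw [Finset.mem_range] at hj; omega]

lemma hasDerivAt_aeval_trace {X : ℝ → Matrix n n ℝ} {X' : Matrix n n ℝ} {t₀ : ℝ}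
    (h : HasDerivAt X X' t₀) (p : ℝ[X]) :
    HasDerivAt (fun t => (Polynomial.aeval (X t) p).trace)
      ((Polynomial.aeval (X t₀) p.derivative * X').trace) t₀ := by
  induction p using Polynomial.induction_on' with
  | add p q hp hq =>
    have := hp.add hq
    simp only [map_add, Matrix.trace_add, add_mul] at *
    exact this
  | monomial k a =>
    have e1 : (fun t => (Polynomial.aeval (X t) (Polynomial.monomial k a)).trace)
        = fun t => a * ((X t) ^ k).trace := by
      funext t
      rw [Polynomial.aeval_monomial]
      simp [Matrix.trace_smul, Algebra.algebraMap_eq_smul_one, Matrix.smul_mul,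
        Matrix.trace_smul, smul_eq_mul]
    rw [e1]
    have h2 := (hasDerivAt_pow_trace h k).const_mul a
    refine h2.congr_deriv ?_
    symm
    rw [Polynomial.derivative_monomial, Polynomial.aeval_monomial]
    simp only [Algebra.algebraMap_eq_smul_one, Matrix.smul_mul, Matrix.trace_smul, smul_eq_mul,
      one_mul, Matrix.smul_mul]
    ring

noncomputable def antider (p : ℝ[X]) : ℝ[X] :=
  p.sum fun i a => Polynomial.C (a / (i + 1)) * Polynomial.X ^ (i + 1)

lemma antider_derivative (p : ℝ[X]) : (antider p).derivative = p := by
  unfold antider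
  rw [Polynomial.sum, map_sum]
  conv_rhs => rw [← Polynomial.sum_monomial_eq p]
  rw [Polynomial.sum]
  refine Finset.sum_congr rfl fun i _ => ?_
  rw [Polynomial.derivative_C_mul_X_pow]
  have : (i + 1 : ℝ) ≠ 0 := by positivity
  rw [Polynomial.C_mul_X_pow_eq_monomial]
  push_cast
  rw [div_mul_cancel₀ _ this]

lemma trace_mul_stdBasis {m' : Type*} [Fintype m'] [DecidableEq m']
    (Q : Matrix n m' ℝ) (i : m') (j : n) :
    (Q * Matrix.single i j (1:ℝ)).trace = Q j i := by
  simp [Matrix.trace, Matrix.diag, Matrix.mul_apply, Matrix.single, Matrix.of_apply,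
    ite_and, mul_ite, mul_one, mul_zero]

lemma stdBasis_transpose {m' : Type*} [Fintype m'] [DecidableEq m'] (i : m') (j : n) :
    (Matrix.single i j (1:ℝ))ᵀ = Matrix.single j i (1:ℝ) := by
  ext a b
  simp [Matrix.single, Matrix.transpose_apply, and_comm]

lemma trace_transpose_mul {m' : Type*} [Fintype m'] (B : Matrix m' n ℝ) :
    (Bᵀ * B).trace = ∑ i, ∑ j, (B i j) ^ 2 := by
  rw [Matrix.trace]
  rw [Finset.sum_comm]
  simp [Matrix.diag, Matrix.mul_apply, sq]

end Aux

section Key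

variable (M N : ℕ) (Y : Fin M → Fin N → ℝ) (f : ℝ → ℝ)

lemma key_deriv (hf : ContDiff ℝ 1 f)
    (hH : ∀ Z : Fin M → Fin N → ℝ, ((Matrix.of Z)ᵀ * Matrix.of Z).IsHermitian)
    (m : Fin M) (n : Fin N) :
    HasDerivAt (fun t : ℝ =>
        ((hH (fun i j => if i = m ∧ j = n then t else Y i j)).cfc f).trace)
      (2 * ((Matrix.of Y * (hH Y).cfc (deriv f)) m n)) (Y m n) := by
  classical
  set t₀ : ℝ := Y m n with ht₀
  set Zr : ℝ → (Fin M → Fin N → ℝ) := fun t i j => if i = m ∧ j = n then t else Y i j with hZr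
  set E : Matrix (Fin M) (Fin N) ℝ := Matrix.single m n 1 with hE
  set C : Matrix (Fin M) (Fin N) ℝ := Matrix.of fun i j => if i = m ∧ j = n then 0 else Y i j
    with hC
  have hZof : ∀ t, Matrix.of (Zr t) = C + t • E := by
    intro t
    ext i j
    rcases eq_or_ne i m with rfl | h1
    · rcases eq_or_ne j n with rfl | h2
      · simp [hZr, hC, hE, Matrix.single]
      · simp [hZr, hC, hE, Matrix.single, h2, Ne.symm h2]
    · simp [hZr, hC, hE, Matrix.single, h1, Ne.symm h1]
  have hZr0 : Zr t₀ = Y := by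
    funext i j
    simp only [hZr]
    split_ifs with h
    · obtain ⟨rfl, rfl⟩ := h; rfl
    · rfl
  -- the path of matrices and its derivative
  set X : ℝ → Matrix (Fin N) (Fin N) ℝ := fun t => (Matrix.of (Zr t))ᵀ * Matrix.of (Zr t)
    with hX
  set XD : ℝ → Matrix (Fin N) (Fin N) ℝ :=
    fun t => (Matrix.of (Zr t))ᵀ * E + Eᵀ * Matrix.of (Zr t) with hXD
  have hXquad : ∀ t, X t = Cᵀ * C + t • (Cᵀ * E + Eᵀ * C) + (t * t) • (Eᵀ * E) := by
    intro t
    rw [hX]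
    simp only [hZof, Matrix.transpose_add, Matrix.transpose_smul, Matrix.add_mul,
      Matrix.mul_add, Matrix.smul_mul, Matrix.mul_smul, smul_smul, smul_add]
    abel
  have hXD' : ∀ t, XD t = (Cᵀ * E + Eᵀ * C) + (t + t) • (Eᵀ * E) := by
    intro t
    rw [hXD]
    simp only [hZof, Matrix.transpose_add, Matrix.transpose_smul, Matrix.add_mul,
      Matrix.mul_add, Matrix.smul_mul, Matrix.mul_smul, add_smul]
    abel
  have hDerivX : ∀ t : ℝ, HasDerivAt X (XD t) t := by
    intro t
    have h1 : HasDerivAt (fun u : ℝ => Cᵀ * C + u • (Cᵀ * E + Eᵀ * C) + (u * u) • (Eᵀ * E))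
        ((Cᵀ * E + Eᵀ * C) + (t + t) • (Eᵀ * E)) t := by
      have h0 := ((hasDerivAt_const t (Cᵀ * C)).add
        ((hasDerivAt_id t).smul_const (Cᵀ * E + Eᵀ * C))).add
        (((hasDerivAt_id t).mul (hasDerivAt_id t)).smul_const (Eᵀ * E))
      simp only [id_eq, zero_add, one_smul, one_mul, mul_one] at h0
      exact h0
    have h2 : (fun u : ℝ => Cᵀ * C + u • (Cᵀ * E + Eᵀ * C) + (u * u) • (Eᵀ * E)) = X := by
      funext u; rw [hXquad u]
    rw [h2] at h1
    rw [hXD' t]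
    exact h1
  -- eigenvalue bounds
  set R : ℝ := ∑ i : Fin M, ∑ j : Fin N, ((Y i j)^2 + (|t₀| + 1)^2) with hR
  have hR0 : 0 ≤ R := Finset.sum_nonneg fun i _ => Finset.sum_nonneg fun j _ => by positivity
  have hCT : ∀ t, (Matrix.of (Zr t))ᴴ = (Matrix.of (Zr t))ᵀ := by
    intro t; ext i j; simp [Matrix.conjTranspose_apply]
  have htrace : ∀ t, (X t).trace = ∑ j : Fin N, ∑ i : Fin M, (Zr t i j)^2 := by
    intro t
    rw [hX, Matrix.trace]
    refine Finset.sum_congr rfl fun j _ => ?_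
    simp [Matrix.diag, Matrix.mul_apply, Matrix.transpose_apply, sq]
  have heig : ∀ t ∈ Set.Icc (t₀ - 1) (t₀ + 1), ∀ i,
      (hH (Zr t)).eigenvalues i ∈ Set.Icc (0:ℝ) R := by
    intro t ht i
    have hpsd : ((Matrix.of (Zr t))ᵀ * Matrix.of (Zr t)).PosSemidef := by
      rw [← hCT t]; exact Matrix.posSemidef_conjTranspose_mul_self _
    have h0 : ∀ i', 0 ≤ (hH (Zr t)).eigenvalues i' := fun i' => hpsd.eigenvalues_nonneg i'
    refine ⟨h0 i, ?_⟩
    have hsum : ∑ i', (hH (Zr t)).eigenvalues i' = (X t).trace :=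
      (trace_eq_sum_eigenvalues _ (hH (Zr t))).symm
    have hle : (hH (Zr t)).eigenvalues i ≤ ∑ i', (hH (Zr t)).eigenvalues i' :=
      Finset.single_le_sum (fun i' _ => h0 i') (Finset.mem_univ i)
    have htb : (X t).trace ≤ R := by
      rw [htrace t, hR, Finset.sum_comm]
      refine Finset.sum_le_sum fun i _ => Finset.sum_le_sum fun j _ => ?_
      simp only [hZr]
      split_ifs with h
      · have h1 : |t| ≤ |t₀| + 1 := by
          rw [abs_le]
          rcases ht with ⟨ha, hb⟩
          constructor
          · have := neg_abs_le t₀; linarith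
          · have := le_abs_self t₀; linarith
        nlinarith [mul_self_le_mul_self (abs_nonneg t) h1, sq_abs t, sq_nonneg (Y i j)]
      · nlinarith [sq_nonneg (|t₀| + 1)]
    linarith
  -- polynomial approximation of deriv f
  have hf' : Differentiable ℝ f := hf.differentiable one_ne_zero
  have hcont : ContinuousOn (deriv f) (Set.Icc (-1 : ℝ) (R + 1)) :=
    (hf.continuous_deriv le_rfl).continuousOn
  choose p hp using fun k : ℕ =>
    exists_polynomial_near_of_continuousOn (-1) (R + 1) (deriv f) hcont (1 / (k + 1))
      (by positivity)
  set q : ℕ → ℝ[X] := fun k => antider (p k) + Polynomial.C (f 0 - (antider (p k)).eval 0)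
    with hqdef
  have hqd : ∀ k, (q k).derivative = p k := by
    intro k
    simp [hqdef, antider_derivative]
  have hq0 : ∀ k, (q k).eval 0 = f 0 := by
    intro k
    simp [hqdef]
  have hmem0 : (0:ℝ) ∈ Set.Icc (-1 : ℝ) (R + 1) := by
    constructor <;> linarith
  have hqf : ∀ k, ∀ x ∈ Set.Icc (-1 : ℝ) (R + 1),
      |(q k).eval x - f x| ≤ (1 / (k + 1)) * (R + 1) := by
    intro k x hx
    have hderiv : ∀ y ∈ Set.Icc (-1 : ℝ) (R + 1),
        HasDerivWithinAt (fun y => (q k).eval y - f y)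
          ((p k).eval y - deriv f y) (Set.Icc (-1 : ℝ) (R + 1)) y := by
      intro y _
      have h1 : HasDerivAt (fun y => (q k).eval y) ((p k).eval y) y := by
        have := Polynomial.hasDerivAt (q k) y
        rwa [hqd k] at this
      exact (h1.sub (hf'.differentiableAt.hasDerivAt)).hasDerivWithinAt
    have hbound : ∀ y ∈ Set.Icc (-1 : ℝ) (R + 1),
        ‖(p k).eval y - deriv f y‖ ≤ 1 / (k + 1) := by
      intro y hy
      exact le_of_lt (hp k y hy)
    have key := (convex_Icc (-1 : ℝ) (R + 1)).norm_image_sub_le_of_norm_hasDerivWithin_le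
      hderiv hbound hmem0 hx
    have hxabs : |x| ≤ R + 1 := by
      rw [abs_le]; rcases hx with ⟨ha, hb⟩; constructor <;> linarith
    rw [hq0 k] at key
    simp only [Real.norm_eq_abs, sub_zero, sub_sub_sub_cancel_right] at key
    calc |(q k).eval x - f x| = |((q k).eval x - f x) - ((q k).eval 0 - f 0)| := by
          rw [hq0 k]; ring_nf
      _ ≤ (1 / (k + 1)) * |x - 0| := by
          have := (convex_Icc (-1 : ℝ) (R + 1)).norm_image_sub_le_of_norm_hasDerivWithin_le
            hderiv hbound hmem0 hx
          simpa [Real.norm_eq_abs] using this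
      _ ≤ (1 / (k + 1)) * (R + 1) := by
          rw [sub_zero]
          have h1 : (0:ℝ) ≤ 1 / (k + 1) := by positivity
          exact mul_le_mul_of_nonneg_left hxabs h1
  -- bound on entries of Zr and XD
  set B : ℝ := (∑ i : Fin M, ∑ j : Fin N, |Y i j|) + |t₀| + 1 with hB
  have hB0 : 0 ≤ B := by
    have : (0:ℝ) ≤ ∑ i : Fin M, ∑ j : Fin N, |Y i j| :=
      Finset.sum_nonneg fun i _ => Finset.sum_nonneg fun j _ => abs_nonneg _
    have := abs_nonneg t₀
    simp only [hB]; linarith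
  have hZe : ∀ t ∈ Set.Icc (t₀ - 1) (t₀ + 1), ∀ a b, |Zr t a b| ≤ B := by
    intro t ht a b
    have hsum : |Y a b| ≤ ∑ i : Fin M, ∑ j : Fin N, |Y i j| := by
      calc |Y a b| ≤ ∑ j : Fin N, |Y a j| :=
            Finset.single_le_sum (f := fun j => |Y a j|) (fun j _ => abs_nonneg _)
              (Finset.mem_univ b)
        _ ≤ ∑ i : Fin M, ∑ j : Fin N, |Y i j| :=
            Finset.single_le_sum (f := fun i => ∑ j : Fin N, |Y i j|)
              (fun i _ => Finset.sum_nonneg fun j _ => abs_nonneg _) (Finset.mem_univ a)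
    simp only [hZr]
    split_ifs with h
    · have h1 : |t| ≤ |t₀| + 1 := by
        rw [abs_le]
        rcases ht with ⟨ha, hb⟩
        constructor
        · have := neg_abs_le t₀; linarith
        · have := le_abs_self t₀; linarith
      have : (0:ℝ) ≤ ∑ i : Fin M, ∑ j : Fin N, |Y i j| :=
        Finset.sum_nonneg fun i _ => Finset.sum_nonneg fun j _ => abs_nonneg _
      simp only [hB]; linarith
    · simp only [hB]
      have := abs_nonneg t₀
      linarith
  have hXDe : ∀ t ∈ Set.Icc (t₀ - 1) (t₀ + 1), ∀ a b, |XD t a b| ≤ 2 * B := by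
    intro t ht a b
    have he : XD t a b = (if n = b then Zr t m a else 0) + (if n = a then Zr t m b else 0) := by
      simp only [hXD, Matrix.add_apply, Matrix.mul_apply, Matrix.transpose_apply, hE,
        Matrix.single, Matrix.of_apply, ite_and, mul_ite, mul_one, mul_zero,
        ite_mul, one_mul, zero_mul]
      congr 1
      · rw [Finset.sum_ite_eq]
        simp
      · rw [Finset.sum_ite_eq]
        simp
    rw [he]
    have h1 := hZe t ht m a
    have h2 := hZe t ht m b
    have key : |(if n = b then Zr t m a else 0) + (if n = a then Zr t m b else 0)|
        ≤ |(if n = b then Zr t m a else 0)| + |(if n = a then Zr t m b else 0)| := abs_add_le _ _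
    have k1 : |(if n = b then Zr t m a else 0)| ≤ B := by
      split_ifs with h
      · exact h1
      · simpa using hB0
    have k2 : |(if n = a then Zr t m b else 0)| ≤ B := by
      split_ifs with h
      · exact h2
      · simpa using hB0
    linarith
  -- the approximating functions and their derivatives
  set gk : ℕ → ℝ → ℝ := fun k t => (Polynomial.aeval (X t) (q k)).trace with hgk
  set g'k : ℕ → ℝ → ℝ := fun k t => ((Polynomial.aeval (X t) (p k)) * XD t).trace with hg'k
  set G : ℝ → ℝ := fun t => (((hH (Zr t)).cfc (deriv f)) * XD t).trace with hG
  set F : ℝ → ℝ := fun t => ((hH (Zr t)).cfc f).trace with hF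
  set s : Set ℝ := Set.Ioo (t₀ - 1) (t₀ + 1) with hs
  have hssub : s ⊆ Set.Icc (t₀ - 1) (t₀ + 1) := Set.Ioo_subset_Icc_self
  have ht₀s : t₀ ∈ s := by constructor <;> simp [hs] <;> linarith
  -- (a) derivatives of the approximants
  have ha : ∀ k : ℕ, ∀ t ∈ s, HasDerivAt (gk k) (g'k k t) t := by
    intro k t _
    have := hasDerivAt_aeval_trace (X := X) (hDerivX t) (q k)
    rw [hqd k] at this
    exact this
  -- eigenvalues in the interval
  have heig' : ∀ t ∈ Set.Icc (t₀ - 1) (t₀ + 1), ∀ i,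
      (hH (Zr t)).eigenvalues i ∈ Set.Icc (-1 : ℝ) (R + 1) := by
    intro t ht i
    rcases heig t ht i with ⟨h1, h2⟩
    constructor <;> linarith
  -- (b) uniform convergence of derivatives on s
  have hb : TendstoUniformlyOn g'k G Filter.atTop s := by
    rw [Metric.tendstoUniformlyOn_iff]
    intro ε hε
    set Kc : ℝ := (N : ℝ) ^ 2 * ((N : ℝ) * (2 * B)) + 1 with hKc
    have hKc0 : 0 < Kc := by
      have h1 : (0:ℝ) ≤ (N : ℝ) ^ 2 * ((N : ℝ) * (2 * B)) := by positivity
      linarith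
    have htend : Filter.Tendsto (fun k : ℕ => Kc * (1 / (k + 1))) Filter.atTop (𝓝 0) := by
      have := tendsto_one_div_add_atTop_nhds_zero_nat.const_mul Kc
      simpa using this
    have hev : ∀ᶠ k : ℕ in Filter.atTop, Kc * (1 / (k + 1)) < ε := by
      have h0 : (0:ℝ) < ε := hε
      exact htend.eventually_lt_const h0
    filter_upwards [hev] with k hk t hts
    have htIcc : t ∈ Set.Icc (t₀ - 1) (t₀ + 1) := hssub hts
    -- rewrite the difference as a single trace
    have hpolyeq : Polynomial.aeval (X t) (p k) = (hH (Zr t)).cfc fun x => (p k).eval x :=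
      (cfc_poly _ (hH (Zr t)) (p k)).symm
    have hdiff : G t - g'k k t
        = (((hH (Zr t)).cfc fun x => deriv f x - (p k).eval x) * XD t).trace := by
      rw [hG, hg'k]
      simp only [hpolyeq]
      rw [← Matrix.trace_sub, ← Matrix.sub_mul, cfc_sub']
    have hentry : ∀ i j, |((hH (Zr t)).cfc fun x => deriv f x - (p k).eval x) i j|
        ≤ (N : ℝ) * (1 / (k + 1)) := by
      intro i j
      have := cfc_entry_le _ (hH (Zr t)) (fun x => deriv f x - (p k).eval x) (1 / (k + 1))
        (fun i' => by
          have hx := heig' t htIcc i'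
          have := hp k _ hx
          rw [abs_sub_comm]
          exact le_of_lt this) i j
      simpa [Fintype.card_fin] using this
    have habs : |G t - g'k k t| ≤ Kc * (1 / (k + 1)) - 1 * (1 / (k+1)) + 0 := by
      rw [hdiff]
      refine le_trans (abs_trace_mul_le _ _) ?_
      have hbd : ∀ i j : Fin N,
          |((hH (Zr t)).cfc fun x => deriv f x - (p k).eval x) i j| * |XD t j i|
            ≤ ((N : ℝ) * (1 / (k + 1))) * (2 * B) := by
        intro i j
        have h1 := hentry i j
        have h2 := hXDe t htIcc j i
        have hnn : (0:ℝ) ≤ (N : ℝ) * (1 / (k + 1)) := by positivity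
        exact mul_le_mul h1 h2 (abs_nonneg _) hnn
      calc ∑ i, ∑ j, |((hH (Zr t)).cfc fun x => deriv f x - (p k).eval x) i j| * |XD t j i|
          ≤ ∑ _i : Fin N, ∑ _j : Fin N, ((N : ℝ) * (1 / (k + 1))) * (2 * B) :=
            Finset.sum_le_sum fun i _ => Finset.sum_le_sum fun j _ => hbd i j
        _ = (N : ℝ) ^ 2 * ((N : ℝ) * (2 * B)) * (1 / (k + 1)) := by
            simp [Finset.sum_const, Fintype.card_fin]
            ring
        _ = Kc * (1 / (k + 1)) - 1 * (1 / (k+1)) + 0 := by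
            rw [hKc]; ring
    rw [Real.dist_eq]
    have : Kc * (1 / (k + 1)) - 1 * (1 / (k+1)) + 0 ≤ Kc * (1 / (k + 1)) := by
      have : (0:ℝ) < 1 / (k+1) := by positivity
      linarith
    linarith [habs, hk]
  -- (c) pointwise convergence of the functions
  have hc : ∀ t ∈ s, Filter.Tendsto (fun k => gk k t) Filter.atTop (𝓝 (F t)) := by
    intro t hts
    have htIcc : t ∈ Set.Icc (t₀ - 1) (t₀ + 1) := hssub hts
    have hbound : ∀ k : ℕ, |gk k t - F t| ≤ ((N : ℝ) * (R + 1)) * (1 / (k + 1)) := by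
      intro k
      have e1 : gk k t = ∑ i, (q k).eval ((hH (Zr t)).eigenvalues i) := by
        rw [hgk]
        simp only [← cfc_poly _ (hH (Zr t)) (q k)]
        exact (congrArg Matrix.trace (cfc_poly _ (hH (Zr t)) (q k))).symm.trans (trace_cfc' _ _ _)
      have e2 : F t = ∑ i, f ((hH (Zr t)).eigenvalues i) := by
        show ((hH (Zr t)).cfc f).trace = _
        rw [trace_cfc']
      rw [e1, e2, ← Finset.sum_sub_distrib]
      refine le_trans (Finset.abs_sum_le_sum_abs _ _) ?_
      calc ∑ i, |(q k).eval ((hH (Zr t)).eigenvalues i) - f ((hH (Zr t)).eigenvalues i)|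
          ≤ ∑ _i : Fin N, (1 / (k + 1)) * (R + 1) :=
            Finset.sum_le_sum fun i _ => hqf k _ (heig' t htIcc i)
        _ = ((N : ℝ) * (R + 1)) * (1 / (k + 1)) := by
            simp [Finset.sum_const, Fintype.card_fin]
            ring
    have htend0 : Filter.Tendsto (fun k : ℕ => ((N : ℝ) * (R + 1)) * (1 / (k + 1)))
        Filter.atTop (𝓝 0) := by
      have := tendsto_one_div_add_atTop_nhds_zero_nat.const_mul ((N : ℝ) * (R + 1))
      simpa using this
    have hz : Filter.Tendsto (fun k => gk k t - F t) Filter.atTop (𝓝 0) :=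
      squeeze_zero_norm hbound htend0
    have := hz.add_const (F t)
    simpa using this
  -- (d) conclude differentiability of F at t₀
  have hd : HasDerivAt F (G t₀) t₀ :=
    hasDerivAt_of_tendstoUniformlyOn isOpen_Ioo hb
      (Filter.Eventually.of_forall ha) hc ht₀s
  -- (e) identify the derivative value
  have hsymA : ∀ i j, ((hH Y).cfc (deriv f)) i j = ((hH Y).cfc (deriv f)) j i := by
    intro i j
    have hh := cfc_isHermitian _ (hH Y) (deriv f)
    conv_lhs => rw [← hh]
    simp [Matrix.conjTranspose_apply]
  have hGt₀ : G t₀ = 2 * ((Matrix.of Y * (hH Y).cfc (deriv f)) m n) := by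
    show (((hH (Zr t₀)).cfc (deriv f)) * XD t₀).trace = _
    have hXDt₀ : XD t₀ = (Matrix.of Y)ᵀ * E + Eᵀ * Matrix.of Y := by
      show (Matrix.of (Zr t₀))ᵀ * E + Eᵀ * Matrix.of (Zr t₀) = _
      rw [hZr0]
    have hcfceq : (hH (Zr t₀)).cfc (deriv f) = (hH Y).cfc (deriv f) := by rw [hZr0]
    rw [hXDt₀, hcfceq]
    rw [mul_add, Matrix.trace_add]
    have h1 : ((hH Y).cfc (deriv f) * ((Matrix.of Y)ᵀ * E)).trace
        = ((hH Y).cfc (deriv f) * (Matrix.of Y)ᵀ) n m := by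
      rw [← Matrix.mul_assoc, hE, trace_mul_stdBasis]
    have h2 : ((hH Y).cfc (deriv f) * (Eᵀ * Matrix.of Y)).trace
        = (Matrix.of Y * (hH Y).cfc (deriv f)) m n := by
      rw [← Matrix.mul_assoc, Matrix.trace_mul_comm, ← Matrix.mul_assoc, hE,
        stdBasis_transpose, trace_mul_stdBasis]
    have h3 : ((hH Y).cfc (deriv f) * (Matrix.of Y)ᵀ) n m
        = (Matrix.of Y * (hH Y).cfc (deriv f)) m n := by
      simp only [Matrix.mul_apply, Matrix.transpose_apply, Matrix.of_apply]
      refine Finset.sum_congr rfl fun k _ => ?_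
      rw [hsymA n k]
      ring
    rw [h1, h2, h3]
    ring
  rw [hGt₀] at hd
  exact hd

end Key

/-- For `X = YᵗY` with eigenvalues `λ_1, …, λ_N` and `f` continuously differentiable,
`Σ_{m,n} (∂ tr f(YᵗY)/∂y_{mn})² = 4 tr(X f'(X)²) = 4 Σ_i λ_i f'(λ_i)²`. -/
theorem sum_sq_partial_deriv_trace (M N : ℕ) (Y : Fin M → Fin N → ℝ)
    (f : ℝ → ℝ) (hf : ContDiff ℝ 1 f)
    (hH : ∀ Z : Fin M → Fin N → ℝ, ((Matrix.of Z)ᵀ * Matrix.of Z).IsHermitian) :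
    (∑ m : Fin M, ∑ n : Fin N,
        (deriv (fun t : ℝ =>
          ((hH (fun i j => if i = m ∧ j = n then t else Y i j)).cfc f).trace) (Y m n)) ^ 2)
      = 4 * ((Matrix.of Y)ᵀ * Matrix.of Y *
          ((hH Y).cfc (deriv f) * (hH Y).cfc (deriv f))).trace ∧
    (∑ m : Fin M, ∑ n : Fin N,
        (deriv (fun t : ℝ =>
          ((hH (fun i j => if i = m ∧ j = n then t else Y i j)).cfc f).trace) (Y m n)) ^ 2)
      = 4 * ∑ i : Fin N, (hH Y).eigenvalues i * (deriv f ((hH Y).eigenvalues i)) ^ 2 := by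
  set A := (hH Y).cfc (deriv f) with hAdef
  have hA : A.IsHermitian := cfc_isHermitian _ (hH Y) (deriv f)
  have hAT : Aᵀ = A := by
    ext i j
    rw [Matrix.transpose_apply]
    conv_lhs => rw [← hA]
    simp [Matrix.conjTranspose_apply]
  have hderiv : ∀ (m : Fin M) (n : Fin N),
      deriv (fun t : ℝ =>
        ((hH (fun i j => if i = m ∧ j = n then t else Y i j)).cfc f).trace) (Y m n)
      = 2 * ((Matrix.of Y * A) m n) := fun m n => (key_deriv M N Y f hf hH m n).deriv
  have hLHS : (∑ m : Fin M, ∑ n : Fin N,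
      (deriv (fun t : ℝ =>
        ((hH (fun i j => if i = m ∧ j = n then t else Y i j)).cfc f).trace) (Y m n)) ^ 2)
      = 4 * ∑ m : Fin M, ∑ n : Fin N, ((Matrix.of Y * A) m n) ^ 2 := by
    rw [Finset.mul_sum]
    refine Finset.sum_congr rfl fun m _ => ?_
    rw [Finset.mul_sum]
    refine Finset.sum_congr rfl fun n _ => ?_
    rw [hderiv m n]
    ring
  have c1 : ((Matrix.of Y)ᵀ * Matrix.of Y * (A * A)).trace
      = ((A * A) * (Matrix.of Y)ᵀ * Matrix.of Y).trace :=
    Matrix.trace_mul_cycle ((Matrix.of Y)ᵀ) (Matrix.of Y) (A * A)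
  have c2 : ((Matrix.of Y * A)ᵀ * (Matrix.of Y * A)).trace
      = ((A * A) * (Matrix.of Y)ᵀ * Matrix.of Y).trace := by
    rw [Matrix.transpose_mul, hAT, ← Matrix.mul_assoc, Matrix.trace_mul_cycle,
      ← Matrix.mul_assoc]
  have htr1 : ((Matrix.of Y)ᵀ * Matrix.of Y * (A * A)).trace
      = ∑ m : Fin M, ∑ n : Fin N, ((Matrix.of Y * A) m n) ^ 2 := by
    rw [c1, ← c2, _root_.trace_transpose_mul]
  have hA' : IsSelfAdjoint ((Matrix.of Y)ᵀ * Matrix.of Y) := hH Y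
  have e1 : _root_.cfc (fun x => x * (deriv f x * deriv f x)) ((Matrix.of Y)ᵀ * Matrix.of Y)
      = ((Matrix.of Y)ᵀ * Matrix.of Y) *
        (_root_.cfc (deriv f) ((Matrix.of Y)ᵀ * Matrix.of Y)
          * _root_.cfc (deriv f) ((Matrix.of Y)ᵀ * Matrix.of Y)) := by
    rw [cfc_mul (fun x => x) (fun x => deriv f x * deriv f x) _ (contOnSpec _ _) (contOnSpec _ _),
      cfc_mul (deriv f) (deriv f) _ (contOnSpec _ _) (contOnSpec _ _), cfc_id' ℝ _ hA']
  have htr2 : ((Matrix.of Y)ᵀ * Matrix.of Y * (A * A)).trace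
      = ∑ i : Fin N, (hH Y).eigenvalues i * (deriv f ((hH Y).eigenvalues i)) ^ 2 := by
    calc ((Matrix.of Y)ᵀ * Matrix.of Y * (A * A)).trace
        = ((hH Y).cfc (fun x => x * (deriv f x * deriv f x))).trace := by
          rw [hAdef, ← Matrix.IsHermitian.cfc_eq, ← e1, Matrix.IsHermitian.cfc_eq]
      _ = ∑ i : Fin N, (hH Y).eigenvalues i * (deriv f ((hH Y).eigenvalues i)) ^ 2 := by
          rw [trace_cfc']
          exact Finset.sum_congr rfl fun i _ => by ring
  constructor
  · rw [hLHS, htr1]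
  · rw [hLHS, ← htr1, htr2]
end

section
/- If μ is a probability measure on ℝ all of whose moments are finite, g is continuous with |g(x)| ≤ P(x) for some polynomial P, and μ_N are random probability measures such that ⟨μ_N, x^r⟩ → ⟨μ, x^r⟩ almost surely for every r ∈ ℕ, and μ is determined by its moments, then ⟨μ_N, g⟩ → ⟨μ, g⟩ almost surely. -/
open MeasureTheory Filter Topology Set
open scoped ENNReal

noncomputable def ramp (R x : ℝ) : ℝ := max 0 (min 1 (R + 1 - |x|))

lemma ramp_nonneg (R x : ℝ) : 0 ≤ ramp R x := le_max_left _ _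

lemma ramp_le_one (R x : ℝ) : ramp R x ≤ 1 := max_le zero_le_one (min_le_left _ _)

lemma ramp_continuous (R : ℝ) : Continuous (ramp R) := by
  unfold ramp; fun_prop

lemma ramp_eq_one {R x : ℝ} (h : |x| ≤ R) : ramp R x = 1 := by
  have h1 : (1:ℝ) ≤ R + 1 - |x| := by linarith
  rw [ramp, min_eq_left h1, max_eq_right zero_le_one]

lemma ramp_eq_zero {R x : ℝ} (h : R + 1 ≤ |x|) : ramp R x = 0 := by
  have h1 : min 1 (R + 1 - |x|) ≤ 0 := le_trans (min_le_right _ _) (by linarith)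
  rw [ramp, max_eq_left h1]

lemma ramp_mono {R R' : ℝ} (h : R ≤ R') (x : ℝ) : ramp R x ≤ ramp R' x :=
  max_le_max le_rfl (min_le_min le_rfl (by linarith))

lemma ramp_hcs (R : ℝ) : HasCompactSupport (ramp R) := by
  refine HasCompactSupport.intro (isCompact_Icc (a := -(R+1)) (b := R+1)) (fun x hx => ?_)
  refine ramp_eq_zero ?_
  rw [mem_Icc, not_and_or] at hx
  rcases hx with hx | hx
  · push_neg at hx
    calc R + 1 ≤ -x := by linarith
      _ ≤ |x| := neg_le_abs x
  · push_neg at hx; exact le_trans (le_of_lt hx) (le_abs_self x)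

lemma even_pow_nonneg (x : ℝ) (m : ℕ) : 0 ≤ x ^ (2*m) := by
  rw [pow_mul]; positivity

lemma abs_pow_le (x : ℝ) {i m : ℕ} (h : i ≤ 2*m) : |x| ^ i ≤ 1 + x ^ (2*m) := by
  rcases le_or_gt |x| 1 with h1 | h1
  · have := pow_le_one₀ (abs_nonneg x) h1 (n := i)
    have := even_pow_nonneg x m
    linarith
  · have h2 : |x| ^ i ≤ |x| ^ (2*m) := pow_le_pow_right₀ (le_of_lt h1) h
    rw [Even.pow_abs (even_two_mul m)] at h2
    linarith

lemma pow_le_succ_even (x : ℝ) (m : ℕ) : x ^ (2*m) ≤ 1 + x ^ (2*m+2) := by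
  have h1 : x ^ (2*m) = |x| ^ (2*m) := (Even.pow_abs (even_two_mul m) x).symm
  have h2 : x ^ (2*m+2) = |x| ^ (2*m+2) := by
    have : (2*m+2) = 2*(m+1) := by ring
    rw [this, Even.pow_abs (even_two_mul (m+1))]
  rw [h1, h2]
  rcases le_or_gt |x| 1 with h | h
  · have := pow_le_one₀ (abs_nonneg x) h (n := 2*m)
    have : (0:ℝ) ≤ |x| ^ (2*m+2) := by positivity
    linarith
  · have := pow_le_pow_right₀ (le_of_lt h) (show 2*m ≤ 2*m+2 by omega)
    linarith

/-- pointwise tail estimate -/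
lemma tail_pointwise {h : ℝ → ℝ} {c : ℝ} {m : ℕ} (hc : 0 ≤ c)
    (hb : ∀ x, |h x| ≤ c * (1 + x^(2*m))) {R : ℝ} (hR : 1 ≤ R) (x : ℝ) :
    |h x| * (1 - ramp R x) ≤ c / R^2 * (x^2 + x^(2*m+2)) := by
  have hR0 : (0:ℝ) < R := lt_of_lt_of_le one_pos hR
  have hR2 : (0:ℝ) < R^2 := by positivity
  have hxm : (0:ℝ) ≤ x^(2*m) := even_pow_nonneg x m
  have hxm2 : (0:ℝ) ≤ x^(2*m+2) := by
    have : (2*m+2) = 2*(m+1) := by ring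
    rw [this]; exact even_pow_nonneg x (m+1)
  rcases le_or_gt |x| R with hx | hx
  · rw [ramp_eq_one hx]
    simp only [sub_self, mul_zero]
    positivity
  · have h1 : 1 - ramp R x ≤ 1 := by have := ramp_nonneg R x; linarith
    have h2 : 0 ≤ 1 - ramp R x := by have := ramp_le_one R x; linarith
    have h3 : |h x| * (1 - ramp R x) ≤ |h x| * 1 := by
      exact mul_le_mul_of_nonneg_left h1 (abs_nonneg _)
    rw [mul_one] at h3
    refine le_trans (le_trans h3 (hb x)) ?_
    have hRx : R^2 ≤ x^2 := by
      have h4 : R ≤ |x| := le_of_lt hx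
      calc R^2 ≤ |x|^2 := by nlinarith
        _ = x^2 := sq_abs x
    have hxx : x^(2*m+2) = x^(2*m) * x^2 := by ring
    rw [div_mul_eq_mul_div, le_div_iff₀ hR2]
    nlinarith [mul_le_mul_of_nonneg_left hRx hxm]

lemma integrable_of_growth {ρ : Measure ℝ} {h : ℝ → ℝ} (hcont : Continuous h)
    {c : ℝ} (hc : 0 ≤ c) {m : ℕ} (hb : ∀ x, |h x| ≤ c * (1 + x^(2*m)))
    (hi : Integrable (fun x => x^2 + x^(2*m+2)) ρ) [IsFiniteMeasure ρ] :
    Integrable h ρ := by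
  have hdom : Integrable (fun x => c*2 + c * (x^2 + x^(2*m+2))) ρ :=
    (integrable_const _).add (hi.const_mul c)
  refine hdom.mono hcont.aestronglyMeasurable (ae_of_all _ fun x => ?_)
  have h1 : |h x| ≤ c * (1 + x^(2*m)) := hb x
  have h2 : x^(2*m) ≤ 1 + x^(2*m+2) := pow_le_succ_even x m
  have h3 : (0:ℝ) ≤ x^2 := sq_nonneg x
  have h4 : c * (1 + x^(2*m)) ≤ c*2 + c * (x^2 + x^(2*m+2)) := by nlinarith
  rw [Real.norm_eq_abs, Real.norm_eq_abs]
  refine le_trans (le_trans h1 h4) (le_abs_self _)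

lemma tail_est {ρ : Measure ℝ} [IsProbabilityMeasure ρ] {h : ℝ → ℝ} (hcont : Continuous h)
    {c : ℝ} (hc : 0 ≤ c) {m : ℕ} (hb : ∀ x, |h x| ≤ c * (1 + x^(2*m)))
    (hi : Integrable (fun x => x^2 + x^(2*m+2)) ρ) {B : ℝ}
    (hB : ∫ x, (x^2 + x^(2*m+2)) ∂ρ ≤ B) {R : ℝ} (hR : 1 ≤ R) :
    |(∫ x, h x ∂ρ) - ∫ x, h x * ramp R x ∂ρ| ≤ c / R^2 * B := by
  have hInt : Integrable h ρ := integrable_of_growth hcont hc hb hi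
  have hIntr : Integrable (fun x => h x * ramp R x) ρ :=
    ((hcont.mul (ramp_continuous R)).integrable_of_hasCompactSupport ((ramp_hcs R).mul_left))
  rw [← integral_sub hInt hIntr]
  have habs : ∀ x, |h x - h x * ramp R x| = |h x| * (1 - ramp R x) := by
    intro x
    have h2 : 0 ≤ 1 - ramp R x := by have := ramp_le_one R x; linarith
    rw [show h x - h x * ramp R x = h x * (1 - ramp R x) by ring, abs_mul, abs_of_nonneg h2]
  calc |∫ x, (h x - h x * ramp R x) ∂ρ| ≤ ∫ x, |h x - h x * ramp R x| ∂ρ := by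
        simpa [Real.norm_eq_abs] using
          norm_integral_le_integral_norm (μ := ρ) (f := fun x => h x - h x * ramp R x)
    _ ≤ ∫ x, c / R^2 * (x^2 + x^(2*m+2)) ∂ρ := by
        refine integral_mono (hInt.sub hIntr).abs (hi.const_mul _) (fun x => ?_)
        rw [habs x]
        exact tail_pointwise hc hb hR x
    _ = c / R^2 * ∫ x, (x^2 + x^(2*m+2)) ∂ρ := integral_const_mul _ _
    _ ≤ c / R^2 * B := by
        refine mul_le_mul_of_nonneg_left hB ?_
        have : (0:ℝ) < R := lt_of_lt_of_le one_pos hR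
        positivity

/-- Uniform-integrability upgrade: convergence against compactly supported continuous
functions plus uniform moment bounds gives convergence for functions of polynomial growth. -/
lemma tendsto_integral_of_growth (ν : ℕ → Measure ℝ) (hprob : ∀ n, IsProbabilityMeasure (ν n))
    (ρ : Measure ℝ) [IsProbabilityMeasure ρ]
    (hw : ∀ f : ℝ → ℝ, Continuous f → HasCompactSupport f →
      Tendsto (fun n => ∫ x, f x ∂ν n) atTop (𝓝 (∫ x, f x ∂ρ)))
    {h : ℝ → ℝ} (hcont : Continuous h) {c : ℝ} (hc : 0 ≤ c) {m : ℕ}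
    (hb : ∀ x, |h x| ≤ c * (1 + x^(2*m)))
    (hi : ∀ n, Integrable (fun x => x^2 + x^(2*m+2)) (ν n))
    (hiρ : Integrable (fun x => x^2 + x^(2*m+2)) ρ) {B : ℝ}
    (hB : ∀ n, ∫ x, (x^2 + x^(2*m+2)) ∂ν n ≤ B)
    (hBρ : ∫ x, (x^2 + x^(2*m+2)) ∂ρ ≤ B) :
    Tendsto (fun n => ∫ x, h x ∂ν n) atTop (𝓝 (∫ x, h x ∂ρ)) := by
  have hB0 : 0 ≤ B := by
    haveI := hprob 0
    refine le_trans ?_ (hB 0)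
    refine integral_nonneg (fun x => ?_)
    have h2 : (2*m+2) = 2*(m+1) := by ring
    have := even_pow_nonneg x (m+1)
    rw [← h2] at this
    have := sq_nonneg x
    positivity
  rw [Metric.tendsto_atTop]
  intro ε hε
  -- choose R
  obtain ⟨k, hk⟩ := exists_nat_gt (max 1 (c*B/(ε/3)))
  set R : ℝ := (k:ℝ) with hRdef
  have hR1 : 1 ≤ R := le_of_lt (lt_of_le_of_lt (le_max_left _ _) hk)
  have hR0 : (0:ℝ) < R := lt_of_lt_of_le one_pos hR1
  have hRtail : c / R^2 * B < ε/3 := by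
    have h1 : c*B/(ε/3) < R := lt_of_le_of_lt (le_max_right _ _) hk
    have h2 : c*B < (ε/3) * R := by
      rw [div_lt_iff₀ (by linarith : (0:ℝ) < ε/3)] at h1; linarith
    rw [div_mul_eq_mul_div, div_lt_iff₀ (by positivity)]
    have h3 : R ≤ R^2 := by nlinarith
    have : c * B ≥ 0 := by positivity
    nlinarith
  -- middle convergence
  have hmid := hw (fun x => h x * ramp R x) (hcont.mul (ramp_continuous R)) ((ramp_hcs R).mul_left)
  obtain ⟨N, hN⟩ := Metric.tendsto_atTop.1 hmid (ε/3) (by linarith)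
  refine ⟨N, fun n hn => ?_⟩
  haveI := hprob n
  have t1 : |(∫ x, h x ∂ν n) - ∫ x, h x * ramp R x ∂ν n| ≤ c / R^2 * B :=
    tail_est hcont hc hb (hi n) (hB n) hR1
  have t2 : |(∫ x, h x ∂ρ) - ∫ x, h x * ramp R x ∂ρ| ≤ c / R^2 * B :=
    tail_est hcont hc hb hiρ hBρ hR1
  have t3 := hN n hn
  rw [Real.dist_eq] at t3 ⊢
  calc |(∫ x, h x ∂ν n) - ∫ x, h x ∂ρ| ≤
      |(∫ x, h x ∂ν n) - ∫ x, h x * ramp R x ∂ν n| +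
      |(∫ x, h x * ramp R x ∂ν n) - ∫ x, h x * ramp R x ∂ρ| +
      |(∫ x, h x * ramp R x ∂ρ) - ∫ x, h x ∂ρ| := by
        have := abs_sub_le (∫ x, h x ∂ν n) (∫ x, h x * ramp R x ∂ν n) (∫ x, h x ∂ρ)
        have := abs_sub_le (∫ x, h x * ramp R x ∂ν n) (∫ x, h x * ramp R x ∂ρ) (∫ x, h x ∂ρ)
        linarith
    _ < ε := by
        have t2' : |(∫ x, h x * ramp R x ∂ρ) - ∫ x, h x ∂ρ| ≤ c / R^2 * B := by
          rwa [abs_sub_comm]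
        linarith

/-- Moments of the weak limit are controlled by uniform moment bounds. -/
lemma limit_moments (ν : ℕ → Measure ℝ) (hprob : ∀ n, IsProbabilityMeasure (ν n)) (ρ : Measure ℝ) [IsProbabilityMeasure ρ]
    (hw : ∀ f : ℝ → ℝ, Continuous f → HasCompactSupport f →
      Tendsto (fun n => ∫ x, f x ∂ν n) atTop (𝓝 (∫ x, f x ∂ρ)))
    (m : ℕ) (hint : ∀ n, Integrable (fun x => x^(2*m)) (ν n))
    {B : ℝ} (hB : ∀ n, ∫ x, x^(2*m) ∂ν n ≤ B) :
    Integrable (fun x => x^(2*m)) ρ ∧ ∫ x, x^(2*m) ∂ρ ≤ B := by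
  set k := 2*m with hk
  have hknn : ∀ x : ℝ, 0 ≤ x^k := fun x => even_pow_nonneg x m
  set f : ℕ → ℝ → ℝ := fun j x => min (x^k) (j:ℝ) * ramp (j:ℝ) x with hf
  have hfc : ∀ j, Continuous (f j) := fun j =>
    ((continuous_pow k).min continuous_const).mul (ramp_continuous _)
  have hfcs : ∀ j, HasCompactSupport (f j) := fun j => (ramp_hcs (j:ℝ)).mul_left
  have hfnn : ∀ j x, 0 ≤ f j x := fun j x =>
    mul_nonneg (le_min (hknn x) (Nat.cast_nonneg j)) (ramp_nonneg _ _)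
  have hfle : ∀ j x, f j x ≤ x^k := fun j x =>
    le_trans (mul_le_of_le_one_right (le_min (hknn x) (Nat.cast_nonneg j)) (ramp_le_one _ _))
      (min_le_left _ _)
  have hfmono : ∀ x, Monotone (fun j => f j x) := by
    intro x i j hij
    exact mul_le_mul (min_le_min le_rfl (by exact_mod_cast hij))
      (ramp_mono (by exact_mod_cast hij) x) (ramp_nonneg _ _)
      (le_min (hknn x) (Nat.cast_nonneg j))
  -- integral bound for each j
  have hfB : ∀ j, ∫ x, f j x ∂ρ ≤ B := by
    intro j
    refine le_of_tendsto (hw (f j) (hfc j) (hfcs j)) (Eventually.of_forall fun n => ?_)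
    haveI := hprob n
    refine le_trans (integral_mono ((hfc j).integrable_of_hasCompactSupport (hfcs j))
      (hint n) (hfle j)) (hB n)
  have hB0 : 0 ≤ B := le_trans (integral_nonneg (hfnn 0)) (hfB 0)
  -- lintegral of the limit
  have hsup : ∀ x : ℝ, ⨆ j : ℕ, ENNReal.ofReal (f j x) = ENNReal.ofReal (x^k) := by
    intro x
    refine le_antisymm (iSup_le fun j => ENNReal.ofReal_le_ofReal (hfle j x)) ?_
    set j₀ : ℕ := ⌈max |x| (x^k)⌉₊ with hj₀
    have h1 : |x| ≤ (j₀:ℝ) := le_trans (le_max_left _ _) (Nat.le_ceil _)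
    have h2 : x^k ≤ (j₀:ℝ) := le_trans (le_max_right _ _) (Nat.le_ceil _)
    have : f j₀ x = x^k := by
      rw [hf]; simp only []
      rw [ramp_eq_one (le_trans h1 (by linarith)), min_eq_left h2, mul_one]
    exact le_iSup_of_le j₀ (le_of_eq (by rw [this]))
  have hlin : ∫⁻ x, ENNReal.ofReal (x^k) ∂ρ ≤ ENNReal.ofReal B := by
    have hmeas : ∀ j : ℕ, Measurable (fun x => ENNReal.ofReal (f j x)) :=
      fun j => (hfc j).measurable.ennreal_ofReal
    have hmono : Monotone (fun j : ℕ => fun x => ENNReal.ofReal (f j x)) :=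
      fun i j hij x => ENNReal.ofReal_le_ofReal (hfmono x hij)
    have h1 : ∫⁻ x, ENNReal.ofReal (x^k) ∂ρ = ⨆ j : ℕ, ∫⁻ x, ENNReal.ofReal (f j x) ∂ρ := by
      rw [← lintegral_iSup hmeas hmono]
      refine lintegral_congr (fun x => ?_)
      exact (hsup x).symm
    rw [h1]
    refine iSup_le fun j => ?_
    rw [← ofReal_integral_eq_lintegral_ofReal
      ((hfc j).integrable_of_hasCompactSupport (hfcs j)) (ae_of_all _ (hfnn j))]
    exact ENNReal.ofReal_le_ofReal (hfB j)
  have hintρ : Integrable (fun x => x^k) ρ := by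
    refine ⟨(continuous_pow k).aestronglyMeasurable, ?_⟩
    rw [hasFiniteIntegral_iff_ofReal (ae_of_all _ hknn)]
    exact lt_of_le_of_lt hlin ENNReal.ofReal_lt_top
  refine ⟨hintρ, ?_⟩
  rw [integral_eq_lintegral_of_nonneg_ae (ae_of_all _ hknn) (continuous_pow k).aestronglyMeasurable]
  exact ENNReal.toReal_le_of_le_ofReal hB0 hlin

lemma cdf_mono (ν : Measure ℝ) [IsProbabilityMeasure ν] :
    Monotone (fun x => (ν (Iic x)).toReal) := fun x y hxy =>
  ENNReal.toReal_mono (measure_ne_top ν _) (measure_mono (Iic_subset_Iic.2 hxy))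

lemma cdf_le_one (ν : Measure ℝ) [IsProbabilityMeasure ν] (x : ℝ) :
    (ν (Iic x)).toReal ≤ 1 := by
  have := prob_le_one (μ := ν) (s := Iic x)
  calc (ν (Iic x)).toReal ≤ (1 : ℝ≥0∞).toReal := ENNReal.toReal_mono ENNReal.one_ne_top this
    _ = 1 := by simp

lemma cdf_Ioc (ν : Measure ℝ) [IsProbabilityMeasure ν] {a b : ℝ} (hab : a ≤ b) :
    (ν (Ioc a b)).toReal = (ν (Iic b)).toReal - (ν (Iic a)).toReal := by
  rw [← Iic_sdiff_Iic,
    measure_diff (Iic_subset_Iic.2 hab) measurableSet_Iic.nullMeasurableSet (measure_ne_top _ _),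
    ENNReal.toReal_sub_of_le (measure_mono (Iic_subset_Iic.2 hab)) (measure_ne_top _ _)]

lemma cdf_tail_lower (ν : Measure ℝ) [IsProbabilityMeasure ν]
    (hi2 : Integrable (fun x => x^2) ν) {B : ℝ} (hB : ∫ x, x^2 ∂ν ≤ B)
    {x : ℝ} (hx : x < 0) : (ν (Iic x)).toReal ≤ B / x^2 := by
  have hx0 : x ≠ 0 := ne_of_lt hx
  have hx2 : (0:ℝ) < x^2 := by positivity
  have h1 : x^2 * (ν (Iic x)).toReal ≤ ∫ y in Iic x, y^2 ∂ν := by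
    refine Eq.trans_le ?_ (setIntegral_ge_of_const_le (c := x^2) measurableSet_Iic (measure_ne_top _ _)
      (fun y hy => ?_) hi2.integrableOn)
    · rw [smul_eq_mul, measureReal_def, mul_comm]
    have := mem_Iic.1 hy
    nlinarith
  have h2 : ∫ y in Iic x, y^2 ∂ν ≤ ∫ y, y^2 ∂ν :=
    setIntegral_le_integral hi2 (ae_of_all _ fun y => sq_nonneg y)
  rw [le_div_iff₀ hx2]
  nlinarith

lemma cdf_tail_upper (ν : Measure ℝ) [IsProbabilityMeasure ν]
    (hi2 : Integrable (fun x => x^2) ν) {B : ℝ} (hB : ∫ x, x^2 ∂ν ≤ B)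
    {x : ℝ} (hx : 0 < x) : 1 - B / x^2 ≤ (ν (Iic x)).toReal := by
  have hx2 : (0:ℝ) < x^2 := by positivity
  have h1 : x^2 * (ν (Ioi x)).toReal ≤ ∫ y in Ioi x, y^2 ∂ν := by
    refine Eq.trans_le ?_ (setIntegral_ge_of_const_le (c := x^2) measurableSet_Ioi (measure_ne_top _ _)
      (fun y hy => ?_) hi2.integrableOn)
    · rw [smul_eq_mul, measureReal_def, mul_comm]
    have := mem_Ioi.1 hy
    nlinarith
  have h2 : ∫ y in Ioi x, y^2 ∂ν ≤ ∫ y, y^2 ∂ν :=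
    setIntegral_le_integral hi2 (ae_of_all _ fun y => sq_nonneg y)
  have h3 : (ν (Iic x)).toReal + (ν (Ioi x)).toReal = 1 := by
    have := measure_add_measure_compl (μ := ν) (measurableSet_Iic (a := x))
    rw [compl_Iic, measure_univ] at this
    have h4 := congrArg ENNReal.toReal this
    rwa [ENNReal.toReal_add (measure_ne_top _ _) (measure_ne_top _ _), ENNReal.toReal_one] at h4
  have h5 : (ν (Ioi x)).toReal ≤ B / x^2 := by
    rw [le_div_iff₀ hx2]; nlinarith
  linarith

lemma Ioc_biUnion (b : ℕ → ℝ) (hb : Monotone b) (m : ℕ) :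
    Ioc (b 0) (b m) = ⋃ i ∈ Finset.range m, Ioc (b i) (b (i+1)) := by
  induction m with
  | zero => simp
  | succ m ih =>
    rw [Finset.range_add_one, Finset.set_biUnion_insert, ← ih, Set.union_comm,
      Ioc_union_Ioc_eq_Ioc (hb (Nat.zero_le m)) (hb (Nat.le_succ m))]

lemma riemann_est (ρ : Measure ℝ) [IsProbabilityMeasure ρ] (f : ℝ → ℝ) (hf : Continuous f)
    {M ε δ : ℝ} (hε : 0 ≤ ε) (hM : ∀ x, M ≤ |x| → f x = 0)
    (hucont : ∀ x y, |x - y| < δ → |f x - f y| ≤ ε)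
    (b : ℕ → ℝ) (m : ℕ) (hlt : ∀ i, b i < b (i+1))
    (hmesh : ∀ i, b (i+1) - b i < δ) (hb0 : b 0 < -M) (hbm : M ≤ b m) :
    |(∫ x, f x ∂ρ) - ∑ i ∈ Finset.range m,
      f (b (i+1)) * (ρ (Ioc (b i) (b (i+1)))).toReal| ≤ ε := by
  have hbmono : Monotone b := monotone_nat_of_le_succ (fun i => le_of_lt (hlt i))
  have hInt : Integrable f ρ := by
    refine hf.integrable_of_hasCompactSupport ?_
    refine HasCompactSupport.intro (isCompact_Icc (a := -M) (b := M)) (fun x hx => ?_)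
    rw [mem_Icc, not_and_or] at hx
    refine hM x ?_
    rcases hx with hx | hx
    · push_neg at hx; calc M ≤ -x := by linarith
        _ ≤ |x| := neg_le_abs x
    · push_neg at hx; exact le_trans (le_of_lt hx) (le_abs_self x)
  have hmeas : ∀ i, MeasurableSet (Ioc (b i) (b (i+1))) := fun i => measurableSet_Ioc
  have hdisj : (↑(Finset.range m) : Set ℕ).Pairwise (Function.onFun Disjoint fun i => Ioc (b i) (b (i+1))) := by
    intro i _ j _ hij
    rcases lt_or_gt_of_ne hij with h | h
    · exact Set.Ioc_disjoint_Ioc.2 (le_trans (min_le_left _ _)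
        (le_trans (hbmono (Nat.succ_le_of_lt h)) (le_max_right _ _)))
    · exact Set.Ioc_disjoint_Ioc.2 (le_trans (min_le_right _ _)
        (le_trans (hbmono (Nat.succ_le_of_lt h)) (le_max_left _ _)))
  have hsplit : ∫ x, f x ∂ρ = ∑ i ∈ Finset.range m, ∫ x in Ioc (b i) (b (i+1)), f x ∂ρ := by
    rw [← integral_biUnion_finset (Finset.range m) (fun i _ => hmeas i) hdisj
      (fun i _ => hInt.integrableOn), ← Ioc_biUnion b hbmono m]
    refine (setIntegral_eq_integral_of_forall_compl_eq_zero (fun x hx => ?_)).symm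
    rw [mem_Ioc, not_and_or] at hx
    refine hM x ?_
    rcases hx with hx | hx
    · push_neg at hx; calc M ≤ -x := by linarith
        _ ≤ |x| := neg_le_abs x
    · push_neg at hx; exact le_trans (le_trans hbm (le_of_lt hx)) (le_abs_self x)
  have hterm : ∀ i, |(∫ x in Ioc (b i) (b (i+1)), f x ∂ρ) -
      f (b (i+1)) * (ρ (Ioc (b i) (b (i+1)))).toReal| ≤ ε * (ρ (Ioc (b i) (b (i+1)))).toReal := by
    intro i
    set s := Ioc (b i) (b (i+1)) with hs
    have h1 : (∫ x in s, f x ∂ρ) - f (b (i+1)) * (ρ s).toReal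
        = ∫ x in s, (f x - f (b (i+1))) ∂ρ := by
      rw [integral_sub hInt.integrableOn (integrableOn_const (measure_ne_top _ _)),
        setIntegral_const, smul_eq_mul, measureReal_def, mul_comm]
    rw [h1]
    have := norm_setIntegral_le_of_norm_le_const (μ := ρ) (s := s)
      (f := fun x => f x - f (b (i+1))) (C := ε) (measure_lt_top _ _)
      (fun x hx => ?_)
    · simpa [Real.norm_eq_abs, measureReal_def] using this
    · rw [Real.norm_eq_abs]
      refine hucont x (b (i+1)) ?_
      rw [hs, mem_Ioc] at hx
      rw [abs_sub_comm, abs_of_nonneg (by linarith [hx.2])]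
      linarith [hx.1, hmesh i]
  have hsum : ∑ i ∈ Finset.range m, (ρ (Ioc (b i) (b (i+1)))).toReal ≤ 1 := by
    have h1 : ∑ i ∈ Finset.range m, (ρ (Ioc (b i) (b (i+1)))).toReal
        = (∑ i ∈ Finset.range m, ρ (Ioc (b i) (b (i+1)))).toReal :=
      (ENNReal.toReal_sum (fun i _ => measure_ne_top _ _)).symm
    rw [h1, ← measure_biUnion_finset hdisj (fun i _ => hmeas i)]
    calc (ρ (⋃ i ∈ Finset.range m, Ioc (b i) (b (i+1)))).toReal
        ≤ (1 : ℝ≥0∞).toReal := ENNReal.toReal_mono ENNReal.one_ne_top (prob_le_one)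
      _ = 1 := by simp
  calc |(∫ x, f x ∂ρ) - ∑ i ∈ Finset.range m, f (b (i+1)) * (ρ (Ioc (b i) (b (i+1)))).toReal|
      = |∑ i ∈ Finset.range m, ((∫ x in Ioc (b i) (b (i+1)), f x ∂ρ)
          - f (b (i+1)) * (ρ (Ioc (b i) (b (i+1)))).toReal)| := by
        rw [Finset.sum_sub_distrib, ← hsplit]
    _ ≤ ∑ i ∈ Finset.range m, |(∫ x in Ioc (b i) (b (i+1)), f x ∂ρ)
          - f (b (i+1)) * (ρ (Ioc (b i) (b (i+1)))).toReal| :=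
        Finset.abs_sum_le_sum_abs _ _
    _ ≤ ∑ i ∈ Finset.range m, ε * (ρ (Ioc (b i) (b (i+1)))).toReal :=
        Finset.sum_le_sum (fun i _ => hterm i)
    _ = ε * ∑ i ∈ Finset.range m, (ρ (Ioc (b i) (b (i+1)))).toReal := by
        rw [Finset.mul_sum]
    _ ≤ ε * 1 := mul_le_mul_of_nonneg_left hsum hε
    _ = ε := mul_one ε

/-- Helly selection: from a sequence of probability measures with uniformly bounded second
moments one can extract a subsequence converging against compactly supported continuous
functions to a probability measure. -/
lemma helly (ν : ℕ → Measure ℝ) (hprob : ∀ n, IsProbabilityMeasure (ν n))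
    {B : ℝ} (hi2 : ∀ n, Integrable (fun x => x^2) (ν n)) (hB : ∀ n, ∫ x, x^2 ∂ν n ≤ B) :
    ∃ φ : ℕ → ℕ, StrictMono φ ∧ ∃ ρ : Measure ℝ, IsProbabilityMeasure ρ ∧
      ∀ f : ℝ → ℝ, Continuous f → HasCompactSupport f →
        Tendsto (fun n => ∫ x, f x ∂ν (φ n)) atTop (𝓝 (∫ x, f x ∂ρ)) := by
  have hB0 : 0 ≤ B := le_trans (integral_nonneg fun x => sq_nonneg x) (hB 0)
  set F : ℕ → ℝ → ℝ := fun n x => (ν n (Iic x)).toReal with hFdef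
  have hF01 : ∀ n x, F n x ∈ Icc (0:ℝ) 1 := fun n x =>
    ⟨ENNReal.toReal_nonneg, @cdf_le_one (ν n) (hprob n) x⟩
  have hFmono : ∀ n, Monotone (F n) := fun n => @cdf_mono (ν n) (hprob n)
  -- diagonal extraction on rationals
  obtain ⟨G, φ, hφ, hG⟩ := CompactSpace.tendsto_subseq
    (fun n => (fun q : ℚ => (⟨F n q, hF01 n q⟩ : Icc (0:ℝ) 1)))
  have hGconv : ∀ q : ℚ, Tendsto (fun n => F (φ n) (q:ℝ)) atTop (𝓝 ((G q : ℝ))) := by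
    intro q
    have h1 := (tendsto_pi_nhds.1 hG) q
    exact ((continuous_subtype_val.tendsto _).comp h1 : _)
  have hGmono : ∀ q q' : ℚ, q ≤ q' → (G q : ℝ) ≤ (G q' : ℝ) := fun q q' h =>
    le_of_tendsto_of_tendsto' (hGconv q) (hGconv q')
      (fun n => hFmono (φ n) (by exact_mod_cast h))
  have hG0 : ∀ q, (0:ℝ) ≤ (G q : ℝ) := fun q => (G q).2.1
  have hG1 : ∀ q, (G q : ℝ) ≤ 1 := fun q => (G q).2.2
  -- define the candidate CDF
  set H : ℝ → ℝ := fun x => sInf ((fun q : ℚ => (G q : ℝ)) '' {q : ℚ | x < (q:ℝ)}) with hHdef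
  have hne : ∀ x : ℝ, ((fun q : ℚ => (G q : ℝ)) '' {q : ℚ | x < (q:ℝ)}).Nonempty := by
    intro x
    obtain ⟨q, hq⟩ := exists_rat_gt x
    exact ⟨_, ⟨q, hq, rfl⟩⟩
  have hbdd : ∀ x : ℝ, BddBelow ((fun q : ℚ => (G q : ℝ)) '' {q : ℚ | x < (q:ℝ)}) := by
    intro x
    exact ⟨0, fun y hy => by obtain ⟨q, _, rfl⟩ := hy; exact hG0 q⟩
  have hHle : ∀ (x : ℝ) (q : ℚ), x < (q:ℝ) → H x ≤ (G q : ℝ) := fun x q hq =>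
    csInf_le (hbdd x) ⟨q, hq, rfl⟩
  have hleH : ∀ (x : ℝ) (q : ℚ), (q:ℝ) ≤ x → (G q : ℝ) ≤ H x := by
    intro x q hq
    refine le_csInf (hne x) (fun y hy => ?_)
    obtain ⟨q', hq', rfl⟩ := hy
    refine hGmono q q' ?_
    exact_mod_cast le_of_lt (lt_of_le_of_lt hq hq')
  have hH0 : ∀ x, 0 ≤ H x := fun x =>
    le_csInf (hne x) (fun y hy => by obtain ⟨q, _, rfl⟩ := hy; exact hG0 q)
  have hH1 : ∀ x, H x ≤ 1 := by
    intro x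
    obtain ⟨q, hq⟩ := exists_rat_gt x
    exact le_trans (hHle x q hq) (hG1 q)
  have hHmono : Monotone H := by
    intro x y hxy
    refine le_csInf (hne y) (fun z hz => ?_)
    obtain ⟨q, hq, rfl⟩ := hz
    exact csInf_le (hbdd x) ⟨q, lt_of_le_of_lt hxy hq, rfl⟩
  have hexistslt : ∀ (x : ℝ) (ε : ℝ), 0 < ε → ∃ q : ℚ, x < (q:ℝ) ∧ (G q : ℝ) < H x + ε := by
    intro x ε hε
    obtain ⟨y, hy, hylt⟩ := exists_lt_of_csInf_lt (hne x) (show H x < H x + ε by linarith)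
    obtain ⟨q, hq, rfl⟩ := hy
    exact ⟨q, hq, hylt⟩
  have hHrc : ∀ x, ContinuousWithinAt H (Ici x) x := by
    intro x
    rw [ContinuousWithinAt, tendsto_order]
    constructor
    · intro a ha
      filter_upwards [self_mem_nhdsWithin] with y hy
      exact lt_of_lt_of_le ha (hHmono hy)
    · intro c hc
      obtain ⟨q, hxq, hq⟩ := hexistslt x (c - H x) (by linarith)
      filter_upwards [Ico_mem_nhdsGE hxq] with y hy
      exact lt_of_le_of_lt (hHle y q hy.2) (by linarith)
  set HS : StieltjesFunction ℝ := ⟨H, hHmono, hHrc⟩ with hHS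
  -- tails of G
  have hGlow : ∀ q : ℚ, (q:ℝ) < 0 → (G q : ℝ) ≤ B / (q:ℝ)^2 := by
    intro q hq
    refine le_of_tendsto (hGconv q) (Eventually.of_forall fun n => ?_)
    exact @cdf_tail_lower (ν (φ n)) (hprob _) (hi2 _) B (hB _) _ hq
  have hGhigh : ∀ q : ℚ, (0:ℝ) < (q:ℝ) → 1 - B / (q:ℝ)^2 ≤ (G q : ℝ) := by
    intro q hq
    refine ge_of_tendsto (hGconv q) (Eventually.of_forall fun n => ?_)
    exact @cdf_tail_upper (ν (φ n)) (hprob _) (hi2 _) B (hB _) _ hq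
  -- limits of H
  have hrchoice : ∀ ε : ℝ, 0 < ε → ∃ r : ℝ, 1 ≤ r ∧ B / r^2 < ε := by
    intro ε hε
    refine ⟨max 1 (B/ε + 1), le_max_left _ _, ?_⟩
    set r := max 1 (B/ε + 1) with hr
    have hr1 : 1 ≤ r := le_max_left _ _
    have hr2 : B/ε + 1 ≤ r := le_max_right _ _
    have hr0 : 0 < r := lt_of_lt_of_le one_pos hr1
    have hεr : ε * (B/ε) = B := by field_simp
    clear_value r
    rw [div_lt_iff₀ (by positivity)]
    have h5 : B + ε ≤ ε * r := by
      have h6 := mul_le_mul_of_nonneg_left hr2 (le_of_lt hε)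
      rw [mul_add, hεr, mul_one] at h6
      linarith
    nlinarith [mul_nonneg (mul_nonneg (le_of_lt hε) (le_of_lt hr0)) (sub_nonneg.2 hr1)]
  have hHbot : Tendsto H atBot (𝓝 0) := by
    rw [Metric.tendsto_nhds]
    intro ε hε
    obtain ⟨r, hr1, hrε⟩ := hrchoice ε hε
    obtain ⟨q, hq⟩ := exists_rat_lt (-r)
    rw [eventually_atBot]
    refine ⟨(q:ℝ) - 1, fun x hx => ?_⟩
    have hq0 : (q:ℝ) < 0 := lt_of_lt_of_le hq (by linarith)
    have h1 : H x ≤ (G q : ℝ) := hHle x q (by linarith)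
    have h2 : (G q : ℝ) ≤ B / (q:ℝ)^2 := hGlow q hq0
    have h3 : B / (q:ℝ)^2 ≤ B / r^2 := by
      refine div_le_div_of_nonneg_left hB0 (by positivity) ?_
      nlinarith
    rw [Real.dist_eq, sub_zero, abs_of_nonneg (hH0 x)]
    calc H x ≤ B / r^2 := le_trans h1 (le_trans h2 h3)
      _ < ε := hrε
  have hHtop : Tendsto H atTop (𝓝 1) := by
    rw [Metric.tendsto_nhds]
    intro ε hε
    obtain ⟨r, hr1, hrε⟩ := hrchoice ε hε
    obtain ⟨q, hq⟩ := exists_rat_gt r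
    rw [eventually_atTop]
    refine ⟨(q:ℝ) + 1, fun x hx => ?_⟩
    have hq0 : (0:ℝ) < (q:ℝ) := lt_of_lt_of_le one_pos (by linarith)
    have h1 : (G q : ℝ) ≤ H x := hleH x q (by linarith)
    have h2 : 1 - B / (q:ℝ)^2 ≤ (G q : ℝ) := hGhigh q hq0
    have h3 : B / (q:ℝ)^2 ≤ B / r^2 := by
      refine div_le_div_of_nonneg_left hB0 (by positivity) ?_
      nlinarith
    rw [Real.dist_eq, abs_sub_comm, abs_of_nonneg (by linarith [hH1 x])]
    have : 1 - H x ≤ B / r^2 := by linarith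
    linarith
  haveI hρprob : IsProbabilityMeasure HS.measure := by
    constructor
    rw [HS.measure_univ hHbot hHtop]
    norm_num
  -- CDF of the limit measure
  have hρIic : ∀ x, (HS.measure (Iic x)).toReal = H x := by
    intro x
    rw [HS.measure_Iic hHbot, sub_zero, ENNReal.toReal_ofReal (hH0 x)]
  have hρIoc : ∀ a b : ℝ, a ≤ b → (HS.measure (Ioc a b)).toReal = H b - H a := by
    intro a b hab
    rw [HS.measure_Ioc, ENNReal.toReal_ofReal (by linarith [hHmono hab] : (0:ℝ) ≤ H b - H a)]
  -- convergence at continuity points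
  have hconvpt : ∀ x : ℝ, ContinuousAt H x →
      Tendsto (fun n => F (φ n) x) atTop (𝓝 (H x)) := by
    intro x hx
    rw [Metric.tendsto_atTop]
    intro ε hε
    obtain ⟨q', hxq', hq'⟩ := hexistslt x (ε/2) (by linarith)
    -- a point y < x where H is close to H x
    have h1 : ∀ᶠ y in 𝓝[<] x, |H y - H x| < ε/2 := by
      have h2 : Tendsto H (𝓝[<] x) (𝓝 (H x)) := hx.tendsto.mono_left nhdsWithin_le_nhds
      have h3 := (Metric.tendsto_nhds.1 h2) (ε/2) (by linarith)
      simpa [Real.dist_eq] using h3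
    obtain ⟨y, hyx, hy⟩ := (h1.and (eventually_mem_nhdsWithin)).exists
    obtain ⟨q, hyq, hqx⟩ := exists_rat_btwn (show y < x from hy)
    have hGq : H x - ε/2 < (G q : ℝ) := by
      have h4 : H y ≤ (G q : ℝ) := hHle y q hyq
      have h5 : H x - ε/2 < H y := by
        rw [abs_sub_lt_iff] at hyx; linarith [hyx.2]
      linarith
    have e1 : ∀ᶠ n in atTop, H x - ε < F (φ n) (q:ℝ) :=
      (hGconv q).eventually (eventually_gt_nhds (by linarith))
    have e2 : ∀ᶠ n in atTop, F (φ n) ((q':ℚ):ℝ) < H x + ε :=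
      (hGconv q').eventually (eventually_lt_nhds (by linarith))
    obtain ⟨N, hN⟩ := eventually_atTop.1 (e1.and e2)
    refine ⟨N, fun n hn => ?_⟩
    obtain ⟨hn1, hn2⟩ := hN n hn
    have h6 : F (φ n) (q:ℝ) ≤ F (φ n) x := hFmono (φ n) (le_of_lt hqx)
    have h7 : F (φ n) x ≤ F (φ n) ((q':ℚ):ℝ) := hFmono (φ n) (le_of_lt hxq')
    rw [Real.dist_eq, abs_sub_lt_iff]
    constructor <;> linarith
  -- dense set of continuity points
  have hS : {x : ℝ | ¬ContinuousAt H x}.Countable := hHmono.countable_not_continuousAt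
  have hD : Dense {x : ℝ | ¬ContinuousAt H x}ᶜ := hS.dense_compl ℝ
  -- conclusion
  refine ⟨φ, hφ, HS.measure, hρprob, ?_⟩
  intro f hf hcs
  rw [Metric.tendsto_atTop]
  intro ε hε
  set ε' := ε/4 with hε'
  have hε'0 : 0 < ε' := by rw [hε']; linarith
  -- uniform continuity
  obtain ⟨δ₀, hδ₀0, hδ₀⟩ := Metric.uniformContinuous_iff.1
    (hcs.uniformContinuous_of_continuous hf) ε' hε'0
  set δ : ℝ := min δ₀ 1 with hδdef
  have hδ0 : 0 < δ := lt_min hδ₀0 one_pos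
  have hδ1 : δ ≤ 1 := min_le_right _ _
  have hucont : ∀ x y : ℝ, |x - y| < δ → |f x - f y| ≤ ε' := by
    intro x y hxy
    have := hδ₀ (a := x) (b := y) (by rw [Real.dist_eq]; exact lt_of_lt_of_le hxy (min_le_left _ _))
    rw [Real.dist_eq] at this
    exact le_of_lt this
  clear_value δ
  -- support bound
  obtain ⟨r₀, hr₀⟩ := Metric.isBounded_iff_subset_closedBall 0 |>.1 hcs.isBounded
  set M : ℝ := max r₀ 0 + 1 with hMdef
  have hM0 : 0 < M := by have : (0:ℝ) ≤ max r₀ 0 := le_max_right _ _; linarith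
  have hM : ∀ x : ℝ, M ≤ |x| → f x = 0 := by
    intro x hx
    refine image_eq_zero_of_notMem_tsupport (fun hmem => ?_)
    have h1 : x ∈ Metric.closedBall 0 r₀ := hr₀ hmem
    rw [Metric.mem_closedBall, Real.dist_eq, sub_zero] at h1
    have h2 : r₀ ≤ max r₀ 0 := le_max_left _ _
    rw [hMdef] at hx
    linarith
  clear_value M
  -- grid
  set t : ℕ → ℝ := fun i => -M - 1 + i * (δ/2) with htdef
  have htsucc : ∀ i : ℕ, t (i+1) = t i + δ/2 := by
    intro i; rw [htdef]; push_cast; ring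
  set m : ℕ := ⌈(2*M+2) / (δ/2)⌉₊ with hmdef
  have htm : M + 1 ≤ t m := by
    have h1 : (2*M+2) / (δ/2) ≤ (m:ℝ) := Nat.le_ceil _
    have h2 : 2*M+2 ≤ (m:ℝ) * (δ/2) := by
      rw [div_le_iff₀ (by linarith : (0:ℝ) < δ/2)] at h1
      linarith
    rw [htdef]
    simp only []
    linarith
  have ht0 : t 0 = -M - 1 := by rw [htdef]; simp
  clear_value t
  clear_value m
  -- choose partition points in the continuity set
  have hchoice : ∀ i : ℕ, ∃ x : ℝ, x ∈ {x : ℝ | ¬ContinuousAt H x}ᶜ ∧ x ∈ Ioo (t i) (t i + δ/4) :=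
    fun i => hD.exists_between (show t i < t i + δ/4 by linarith)
  choose b hbmem hbIoo using hchoice
  have hbcont : ∀ i, ContinuousAt H (b i) := by
    intro i
    have := hbmem i
    simpa using this
  have hblt : ∀ i, b i < b (i+1) := by
    intro i
    have h1 := (hbIoo i).2
    have h2 := (hbIoo (i+1)).1
    rw [htsucc i] at h2
    linarith
  have hbmesh : ∀ i, b (i+1) - b i < δ := by
    intro i
    have h1 := (hbIoo (i+1)).2
    have h2 := (hbIoo i).1
    rw [htsucc i] at h1
    linarith
  have hb0 : b 0 < -M := by
    have h1 := (hbIoo 0).2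
    rw [ht0] at h1
    linarith
  have hbm : M ≤ b m := by
    have h1 := (hbIoo m).1
    linarith
  -- the two Riemann estimates
  have estn : ∀ n : ℕ, |(∫ x, f x ∂ν (φ n)) - ∑ i ∈ Finset.range m,
      f (b (i+1)) * (ν (φ n) (Ioc (b i) (b (i+1)))).toReal| ≤ ε' :=
    fun n => @riemann_est (ν (φ n)) (hprob _) f hf M ε' δ (le_of_lt hε'0) hM hucont b m
      hblt hbmesh hb0 hbm
  have estρ : |(∫ x, f x ∂HS.measure) - ∑ i ∈ Finset.range m,
      f (b (i+1)) * (HS.measure (Ioc (b i) (b (i+1)))).toReal| ≤ ε' :=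
    riemann_est HS.measure f hf (le_of_lt hε'0) hM hucont b m hblt hbmesh hb0 hbm
  -- convergence of the Riemann sums
  have hsumconv : Tendsto (fun n => ∑ i ∈ Finset.range m,
      f (b (i+1)) * (ν (φ n) (Ioc (b i) (b (i+1)))).toReal) atTop
      (𝓝 (∑ i ∈ Finset.range m, f (b (i+1)) * (HS.measure (Ioc (b i) (b (i+1)))).toReal)) := by
    refine tendsto_finset_sum _ (fun i _ => ?_)
    have h1 : ∀ n, (ν (φ n) (Ioc (b i) (b (i+1)))).toReal
        = F (φ n) (b (i+1)) - F (φ n) (b i) :=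
      fun n => @cdf_Ioc (ν (φ n)) (hprob _) _ _ (le_of_lt (hblt i))
    have h2 : (HS.measure (Ioc (b i) (b (i+1)))).toReal = H (b (i+1)) - H (b i) :=
      hρIoc _ _ (le_of_lt (hblt i))
    simp_rw [h1, h2]
    exact ((hconvpt _ (hbcont (i+1))).sub (hconvpt _ (hbcont i))).const_mul _
  obtain ⟨N, hN⟩ := Metric.tendsto_atTop.1 hsumconv ε' hε'0
  refine ⟨N, fun n hn => ?_⟩
  have h3 := hN n hn
  rw [Real.dist_eq] at h3 ⊢
  have h4 := estn n
  calc |(∫ x, f x ∂ν (φ n)) - ∫ x, f x ∂HS.measure|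
      ≤ |(∫ x, f x ∂ν (φ n)) - ∑ i ∈ Finset.range m,
          f (b (i+1)) * (ν (φ n) (Ioc (b i) (b (i+1)))).toReal|
        + |(∑ i ∈ Finset.range m, f (b (i+1)) * (ν (φ n) (Ioc (b i) (b (i+1)))).toReal)
            - ∑ i ∈ Finset.range m, f (b (i+1)) * (HS.measure (Ioc (b i) (b (i+1)))).toReal|
        + |(∑ i ∈ Finset.range m, f (b (i+1)) * (HS.measure (Ioc (b i) (b (i+1)))).toReal)
            - ∫ x, f x ∂HS.measure| := by
        have ha := abs_sub_le (∫ x, f x ∂ν (φ n))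
          (∑ i ∈ Finset.range m, f (b (i+1)) * (ν (φ n) (Ioc (b i) (b (i+1)))).toReal)
          (∫ x, f x ∂HS.measure)
        have hb := abs_sub_le
          (∑ i ∈ Finset.range m, f (b (i+1)) * (ν (φ n) (Ioc (b i) (b (i+1)))).toReal)
          (∑ i ∈ Finset.range m, f (b (i+1)) * (HS.measure (Ioc (b i) (b (i+1)))).toReal)
          (∫ x, f x ∂HS.measure)
        linarith
    _ < ε := by
        have h5 : |(∑ i ∈ Finset.range m, f (b (i+1)) * (HS.measure (Ioc (b i) (b (i+1)))).toReal)
            - ∫ x, f x ∂HS.measure| ≤ ε' := by rwa [abs_sub_comm]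
        rw [hε'] at *
        linarith

lemma poly_growth (Q : Polynomial ℝ) :
    ∃ c : ℝ, 0 ≤ c ∧ ∀ x, |Q.eval x| ≤ c * (1 + x^(2*Q.natDegree)) := by
  set d := Q.natDegree with hd
  set c := ∑ i ∈ Finset.range (d+1), |Q.coeff i| with hc
  have hc0 : 0 ≤ c := Finset.sum_nonneg fun i _ => abs_nonneg _
  refine ⟨c, hc0, fun x => ?_⟩
  rw [Polynomial.eval_eq_sum_range]
  calc |∑ i ∈ Finset.range (d+1), Q.coeff i * x^i|
      ≤ ∑ i ∈ Finset.range (d+1), |Q.coeff i * x^i| := Finset.abs_sum_le_sum_abs _ _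
    _ = ∑ i ∈ Finset.range (d+1), |Q.coeff i| * |x|^i := by
        simp [abs_mul, abs_pow]
    _ ≤ ∑ i ∈ Finset.range (d+1), |Q.coeff i| * (1 + x^(2*d)) := by
        refine Finset.sum_le_sum (fun i hi => ?_)
        refine mul_le_mul_of_nonneg_left (abs_pow_le x ?_) (abs_nonneg _)
        have := Finset.mem_range.1 hi
        omega
    _ = c * (1 + x^(2*d)) := by rw [hc, Finset.sum_mul]

/-- The Fréchet–Shohat style extraction: under moment convergence and determinacy,
a subsequence of the integrals of `g` converges to `∫ g dμ`. -/
lemma frechet_shohat (μ : Measure ℝ) [IsProbabilityMeasure μ]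
    (hdet : ∀ ν : Measure ℝ, IsProbabilityMeasure ν →
      (∀ r : ℕ, Integrable (fun x => x ^ r) ν ∧ ∫ x, x ^ r ∂ν = ∫ x, x ^ r ∂μ) → ν = μ)
    (ν : ℕ → Measure ℝ) (hprob : ∀ n, IsProbabilityMeasure (ν n))
    (hint : ∀ n r, Integrable (fun x => x ^ r) (ν n))
    (hconv : ∀ r : ℕ, Tendsto (fun n => ∫ x, x ^ r ∂ν n) atTop (𝓝 (∫ x, x ^ r ∂μ)))
    (g : ℝ → ℝ) (hg : Continuous g) (c : ℝ) (hc : 0 ≤ c) (mg : ℕ)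
    (hgb : ∀ x, |g x| ≤ c * (1 + x^(2*mg))) :
    ∃ φ : ℕ → ℕ, StrictMono φ ∧
      Tendsto (fun n => ∫ x, g x ∂ν (φ n)) atTop (𝓝 (∫ x, g x ∂μ)) := by
  -- uniform bounds on all moments
  have hbdd : ∀ r : ℕ, ∃ Br : ℝ, ∀ n, ∫ x, x ^ r ∂ν n ≤ Br := by
    intro r
    obtain ⟨Br, hBr⟩ := (hconv r).bddAbove_range
    exact ⟨Br, fun n => hBr ⟨n, rfl⟩⟩
  choose Bm hBm using hbdd
  obtain ⟨φ, hφ, ρ, hρ, hw⟩ := helly ν hprob (fun n => hint n 2) (hBm 2)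
  haveI := hρ
  -- even moments of the limit
  have hwmom : ∀ k : ℕ, Integrable (fun x => x^(2*k)) ρ ∧ ∫ x, x^(2*k) ∂ρ ≤ Bm (2*k) :=
    fun k => limit_moments (fun n => ν (φ n)) (fun n => hprob _) ρ hw k
      (fun n => hint _ (2*k)) (fun n => hBm (2*k) (φ n))
  -- combined moment data for the truncation lemma
  have hcomb : ∀ m : ℕ, (∀ n, Integrable (fun x => x^2 + x^(2*m+2)) (ν (φ n))) ∧
      Integrable (fun x => x^2 + x^(2*m+2)) ρ ∧
      (∀ n, ∫ x, (x^2 + x^(2*m+2)) ∂ν (φ n) ≤ Bm 2 + Bm (2*m+2)) ∧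
      ∫ x, (x^2 + x^(2*m+2)) ∂ρ ≤ Bm 2 + Bm (2*m+2) := by
    intro m
    have h2 : 2*m+2 = 2*(m+1) := by ring
    have hiρ2 : Integrable (fun x : ℝ => x^2) ρ := by
      have := (hwmom 1).1; norm_num at this; exact this
    have hiρm : Integrable (fun x : ℝ => x^(2*m+2)) ρ := by
      have := (hwmom (m+1)).1; rw [← h2] at this; exact this
    have hBρ2 : ∫ x, x^2 ∂ρ ≤ Bm 2 := by
      have := (hwmom 1).2; norm_num at this; exact this
    have hBρm : ∫ x, x^(2*m+2) ∂ρ ≤ Bm (2*m+2) := by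
      have := (hwmom (m+1)).2; rw [h2]; exact this
    refine ⟨fun n => (hint _ 2).add (hint _ (2*m+2)), hiρ2.add hiρm, fun n => ?_, ?_⟩
    · rw [integral_add (hint _ 2) (hint _ (2*m+2))]
      exact add_le_add (hBm 2 (φ n)) (hBm (2*m+2) (φ n))
    · rw [integral_add hiρ2 hiρm]
      exact add_le_add hBρ2 hBρm
  -- moments of ρ agree with those of μ
  have hmomρ : ∀ r : ℕ, Integrable (fun x => x ^ r) ρ ∧ ∫ x, x ^ r ∂ρ = ∫ x, x ^ r ∂μ := by
    intro r
    have hgrow : ∀ x : ℝ, |x ^ r| ≤ 1 * (1 + x^(2*r)) := by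
      intro x
      rw [one_mul, abs_pow]
      exact abs_pow_le x (by omega)
    have hintρ : Integrable (fun x => x ^ r) ρ := by
      refine ((integrable_const (1:ℝ)).add (hwmom r).1).mono
        ((continuous_pow r).aestronglyMeasurable) (ae_of_all _ fun x => ?_)
      rw [Real.norm_eq_abs, Real.norm_eq_abs]
      have h1 := hgrow x
      rw [one_mul] at h1
      refine le_trans h1 (le_abs_self _)
    obtain ⟨hi1, hi2, hi3, hi4⟩ := hcomb r
    have ht1 : Tendsto (fun n => ∫ x, x ^ r ∂ν (φ n)) atTop (𝓝 (∫ x, x ^ r ∂ρ)) :=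
      tendsto_integral_of_growth (fun n => ν (φ n)) (fun n => hprob _) ρ hw
        (continuous_pow r) zero_le_one hgrow hi1 hi2 hi3 hi4
    have ht2 : Tendsto (fun n => ∫ x, x ^ r ∂ν (φ n)) atTop (𝓝 (∫ x, x ^ r ∂μ)) :=
      (hconv r).comp hφ.tendsto_atTop
    exact ⟨hintρ, tendsto_nhds_unique ht1 ht2⟩
  have hρμ : ρ = μ := hdet ρ hρ hmomρ
  refine ⟨φ, hφ, ?_⟩
  obtain ⟨hj1, hj2, hj3, hj4⟩ := hcomb mg
  have := tendsto_integral_of_growth (fun n => ν (φ n)) (fun n => hprob _) ρ hw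
    hg hc hgb hj1 hj2 hj3 hj4
  rwa [hρμ] at this

/-- Moment method upgrade: if `μ` is a probability measure with all moments finite which is
determined by its moments, `μ_N` are random probability measures with finite moments whose
moments converge almost surely to those of `μ`, and `g` is continuous of polynomial growth,
then `⟨μ_N, g⟩ → ⟨μ, g⟩` almost surely. -/
theorem moment_method_polynomial_growth {Ω : Type*} [MeasurableSpace Ω] (P : Measure Ω)
    [IsProbabilityMeasure P] (μ : Measure ℝ) [IsProbabilityMeasure μ]
    (hmom : ∀ r : ℕ, Integrable (fun x => x ^ r) μ)
    (hdet : ∀ ν : Measure ℝ, IsProbabilityMeasure ν →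
      (∀ r : ℕ, Integrable (fun x => x ^ r) ν ∧ ∫ x, x ^ r ∂ν = ∫ x, x ^ r ∂μ) → ν = μ)
    (μN : ℕ → Ω → Measure ℝ) (hμN : ∀ n ω, IsProbabilityMeasure (μN n ω))
    (hμNmom : ∀ n ω (r : ℕ), Integrable (fun x => x ^ r) (μN n ω))
    (hconv : ∀ r : ℕ, ∀ᵐ ω ∂P,
      Tendsto (fun n => ∫ x, x ^ r ∂(μN n ω)) atTop (nhds (∫ x, x ^ r ∂μ)))
    (g : ℝ → ℝ) (hg : Continuous g) (Q : Polynomial ℝ) (hgQ : ∀ x, |g x| ≤ Q.eval x) :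
    ∀ᵐ ω ∂P, Tendsto (fun n => ∫ x, g x ∂(μN n ω)) atTop (nhds (∫ x, g x ∂μ)) := by
  obtain ⟨c, hc0, hgc⟩ := poly_growth Q
  have hgb : ∀ x, |g x| ≤ c * (1 + x^(2*Q.natDegree)) :=
    fun x => le_trans (le_trans (hgQ x) (le_abs_self _)) (hgc x)
  have hae : ∀ᵐ ω ∂P, ∀ r : ℕ,
      Tendsto (fun n => ∫ x, x ^ r ∂(μN n ω)) atTop (𝓝 (∫ x, x ^ r ∂μ)) :=
    ae_all_iff.2 hconv
  filter_upwards [hae] with ω hω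
  refine tendsto_of_subseq_tendsto (fun ns hns => ?_)
  obtain ⟨φ, hφ, ht⟩ := frechet_shohat μ hdet (fun k => μN (ns k) ω)
    (fun k => hμN _ _) (fun k r => hμNmom _ _ r)
    (fun r => (hω r).comp hns) g hg c hc0 Q.natDegree hgb
  exact ⟨φ, ht⟩
end
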